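/- Let 0 < α < β < 1 and let V_α, V_β be the varieties generated by A_α and A_β respectively. Then the variety V_α ∩ V_β is nilpotent: there exists m such that c_{m+2}(V_α ∩ V_β) = 0, i.e., every product of m+2 elements in any algebra of V_α ∩ V_β is zero. -/

import Mathlib

noncomputable section

open Filter Topology

/-- Is a free-magma element a single leaf? -/
def FreeMagma.isLeaf {X : Type*} : FreeMagma X → Bool
  | .of _ => true
  | .mul _ _ => false

/-- The number of occurrences of the subword `a·a` in a monomial in one generator `a`. -/
def countSq : FreeMagma Unit → ℕ
  | .of _ => 0
  | .mul x y => countSq x + countSq y + (if x.isLeaf && y.isLeaf then 1 else 0)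

variable (F : Type) [Field F] [CharZero F]

/-- The free nonassociative (non-unital) algebra on one generator `a`. -/
abbrev FA := FreeNonUnitalNonAssocAlgebra F Unit

/-- The monomial of `FA F` corresponding to a magma word. -/
def mono (m : FreeMagma Unit) : FA F := MonoidAlgebra.single m (1 : F)

/-- The relations ideal of `A`: the span of all monomials containing two or more
subwords equal to `a²`.  The algebra `A` of the paper is `FA F` modulo `relI F`. -/
def relI : Submodule F (FA F) :=
  Submodule.span F {x : FA F | ∃ m : FreeMagma Unit, 2 ≤ countSq m ∧ x = mono F m}

/-- Number of occurrences of the variable `i` in a magma word over `ℕ`. -/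
def occ : FreeMagma ℕ → ℕ → ℕ
  | .of j, i => if j = i then 1 else 0
  | .mul x y, i => occ x i + occ y i

/-- The free nonassociative algebra on countably many variables `x₀, x₁, …`. -/
abbrev FreeN := FreeNonUnitalNonAssocAlgebra F ℕ

/-- The monomial of `FreeN F` corresponding to a magma word. -/
def monoN (t : FreeMagma ℕ) : FreeN F := MonoidAlgebra.single t (1 : F)

/-- `P_n`: the space of multilinear polynomials in the variables `x₀, …, x_{n-1}`. -/
def Pmulti (n : ℕ) : Submodule F (FreeN F) :=
  Submodule.span F {x : FreeN F | ∃ t : FreeMagma ℕ,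
    (∀ i : ℕ, occ t i = if i < n then 1 else 0) ∧ x = monoN F t}

/-- The identities of the algebra `A = FA F / relI F`: polynomials vanishing under every
substitution of elements of `A`. -/
def IdA : Submodule F (FreeN F) :=
  ⨅ xs : ℕ → FA F,
    Submodule.comap (FreeNonUnitalNonAssocAlgebra.lift F xs : FreeN F →ₗ[F] FA F) (relI F)

/-- The `n`-th codimension of `A`: the dimension of `P_n/(P_n ∩ Id(A))`. -/
def codimA (n : ℕ) : ℕ :=
  Module.finrank F (↥(Pmulti F n) ⧸ Submodule.comap (Pmulti F n).subtype (IdA F))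

/-- Apply a word in `L_a` (letter `0`) and `R_a` (letter `1`) to a magma element,
left-to-right. -/
def chain (t : FreeMagma Unit) : List (Fin 2) → FreeMagma Unit
  | [] => t
  | b :: rest => chain (if b = 1 then t * FreeMagma.of () else FreeMagma.of () * t) rest

/-- The monomial `a²`. -/
def aSq : FreeMagma Unit := FreeMagma.of () * FreeMagma.of ()

/-- `subt s m` : `s` occurs as a subterm of the magma word `m`. -/
def subt (s : FreeMagma Unit) : FreeMagma Unit → Prop
  | .of x => s = .of x
  | .mul a b => s = FreeMagma.mul a b ∨ subt s a ∨ subt s b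

/-- `u` is a factor of the infinite word `w`. -/
def IsFactor (u : List (Fin 2)) (w : ℕ → Fin 2) : Prop :=
  ∃ i : ℕ, ∀ j : ℕ, j < u.length → u.getD j 0 = w (i + j)

/-- Monomials lying in the ideal `I_w` of relations of `A_w`: those with two subwords `a²`,
or containing some `a²u(L_a,R_a)` with `u` not a factor of `w` as a subterm. -/
def badMono (w : ℕ → Fin 2) (m : FreeMagma Unit) : Prop :=
  2 ≤ countSq m ∨ ∃ u : List (Fin 2), ¬ IsFactor u w ∧ subt (chain aSq u) m

/-- The relations ideal of the algebra `A_w = A/I_w`, inside the free algebra. -/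
def relIW (w : ℕ → Fin 2) : Submodule F (FA F) :=
  Submodule.span F {x : FA F | ∃ m : FreeMagma Unit, badMono w m ∧ x = mono F m}

/-- The identities of `A_w`. -/
def IdW (w : ℕ → Fin 2) : Submodule F (FreeN F) :=
  ⨅ xs : ℕ → FA F,
    Submodule.comap (FreeNonUnitalNonAssocAlgebra.lift F xs : FreeN F →ₗ[F] FA F) (relIW F w)

/-- The `n`-th codimension of `A_w`. -/
def codimW (w : ℕ → Fin 2) (n : ℕ) : ℕ :=
  Module.finrank F (↥(Pmulti F n) ⧸ Submodule.comap (Pmulti F n).subtype (IdW F w))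

/-- Number of `1`'s among `w 0, …, w (n-1)`. -/
def pcount (w : ℕ → Fin 2) (n : ℕ) : ℕ := ((Finset.range n).filter fun i => w i = 1).card

/-- The set of factors of length `n` of `w`, and the complexity function. -/
def Factors (w : ℕ → Fin 2) (n : ℕ) : Set (Fin n → Fin 2) :=
  {v | ∃ i : ℕ, ∀ j : Fin n, v j = w (i + j)}

noncomputable def Comp (w : ℕ → Fin 2) (n : ℕ) : ℕ := (Factors w n).ncard

/-- Number of leaves (degree) of a magma word. -/
def numLeaves : FreeMagma ℕ → ℕ
  | .of _ => 1
  | .mul x y => numLeaves x + numLeaves y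

/-- An algebra `B` lies in the variety generated by `A_w` iff it satisfies all
identities of `A_w`. -/
def InVarietyOf (w : ℕ → Fin 2) (B : Type) [NonUnitalNonAssocRing B] [Module F B]
    [IsScalarTower F B B] [SMulCommClass F B B] : Prop :=
  ∀ f : FreeN F, f ∈ IdW F w →
    ∀ xs : ℕ → B, FreeNonUnitalNonAssocAlgebra.lift F xs f = 0

namespace NilpAux
open scoped Classical

abbrev W2 := ℕ → Fin 2

lemma fin2_cases (a : Fin 2) : a = 0 ∨ a = 1 := by fin_cases a <;> simp

lemma fin2_ne {a b : Fin 2} (h : a ≠ b) (h0 : a ≠ 0) : a = 1 ∧ b = 0 := by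
  rcases fin2_cases a with h1 | h1 <;> rcases fin2_cases b with h2 | h2 <;> simp_all

def onesCnt (w : W2) (i n : ℕ) : ℕ := ((Finset.range n).filter fun k => w (i+k) = 1).card

lemma onesCnt_zero (w : W2) (i : ℕ) : onesCnt w i 0 = 0 := by simp [onesCnt]

lemma onesCnt_succ (w : W2) (i n : ℕ) :
    onesCnt w i (n+1) = onesCnt w i n + if w (i+n) = 1 then 1 else 0 := by
  by_cases h : w (i+n) = 1 <;>
    simp [onesCnt, Finset.range_add_one, Finset.filter_insert, h,
      Finset.card_insert_of_notMem]

lemma onesCnt_one (w : W2) (i : ℕ) : onesCnt w i 1 = if w i = 1 then 1 else 0 := by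
  rw [onesCnt_succ, onesCnt_zero, Nat.zero_add, Nat.add_zero]

lemma onesCnt_add (w : W2) (i a b : ℕ) :
    onesCnt w i (a + b) = onesCnt w i a + onesCnt w (i + a) b := by
  induction b with
  | zero => simp [onesCnt_zero]
  | succ b ih =>
      have : a + (b+1) = (a+b) + 1 := by omega
      rw [this, onesCnt_succ, ih, onesCnt_succ]
      have : i + (a + b) = i + a + b := by omega
      rw [this]; omega

lemma onesCnt_le (w : W2) (i n : ℕ) : onesCnt w i n ≤ n := by
  simpa [onesCnt] using Finset.card_filter_le (Finset.range n) _

lemma onesCnt_congr {w w' : W2} {i i' n : ℕ} (h : ∀ k, k < n → w (i+k) = w' (i'+k)) :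
    onesCnt w i n = onesCnt w' i' n := by
  unfold onesCnt
  congr 1
  apply Finset.filter_congr
  intro k hk
  rw [h k (Finset.mem_range.1 hk)]

lemma pcount_eq (w : W2) (n : ℕ) : pcount w n = onesCnt w 0 n := by
  unfold pcount onesCnt
  congr 1
  apply Finset.filter_congr
  intro k _
  rw [Nat.zero_add]

def win (w : W2) (i n : ℕ) : Fin n → Fin 2 := fun j => w (i + j)

lemma win_mem (w : W2) (i n : ℕ) : win w i n ∈ Factors w n := ⟨i, fun _ => rfl⟩

lemma mem_factors_iff {w : W2} {n : ℕ} {v : Fin n → Fin 2} :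
    v ∈ Factors w n ↔ ∃ i, v = win w i n := by
  constructor
  · rintro ⟨i, h⟩; exact ⟨i, funext fun j => h j⟩
  · rintro ⟨i, rfl⟩; exact win_mem w i n

lemma win_eq_iff {w : W2} {i i' n : ℕ} :
    win w i n = win w i' n ↔ ∀ k, k < n → w (i+k) = w (i'+k) := by
  constructor
  · intro h k hk
    have := congrFun h ⟨k, hk⟩
    simpa [win] using this
  · intro h; funext j; exact h j j.2

def Fset (w : W2) (n : ℕ) : Finset (Fin n → Fin 2) :=
  Set.Finite.toFinset (Set.toFinite (Factors w n))

lemma mem_Fset {w : W2} {n : ℕ} {v : Fin n → Fin 2} : v ∈ Fset w n ↔ v ∈ Factors w n :=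
  Set.Finite.mem_toFinset _

lemma card_Fset (w : W2) (n : ℕ) : (Fset w n).card = Comp w n :=
  (Set.ncard_eq_toFinset_card _ _).symm

def EvP (w : W2) : Prop := ∃ N T : ℕ, 0 < T ∧ ∀ i, N ≤ i → w (i + T) = w i

def St (w : W2) : Prop := ∀ n : ℕ, 1 ≤ n → Comp w n = n + 1

lemma comp_bounded_of_evp {w : W2} (h : EvP w) : ∃ K, 1 ≤ K ∧ ∀ n, Comp w n ≤ K := by
  obtain ⟨N, T, hT, hper⟩ := h
  refine ⟨N + T, by omega, fun n => ?_⟩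
  have key : ∀ i, ∃ i' < N + T, win w i' n = win w i n := by
    intro i
    induction i using Nat.strong_induction_on with
    | _ i ih =>
      by_cases hi : i < N + T
      · exact ⟨i, hi, rfl⟩
      · obtain ⟨i', hi', he⟩ := ih (i - T) (by omega)
        refine ⟨i', hi', he.trans ?_⟩
        rw [win_eq_iff]
        intro k hk
        have := hper (i - T + k) (by omega)
        have h2 : i - T + k + T = i + k := by omega
        rw [h2] at this
        exact this.symm
  have hsub : Fset w n ⊆ (Finset.range (N+T)).image (fun i => win w i n) := by
    intro v hv
    rw [mem_Fset, mem_factors_iff] at hv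
    obtain ⟨i, rfl⟩ := hv
    obtain ⟨i', hi', he⟩ := key i
    exact Finset.mem_image.2 ⟨i', Finset.mem_range.2 hi', he⟩
  calc Comp w n = (Fset w n).card := (card_Fset w n).symm
    _ ≤ _ := Finset.card_le_card hsub
    _ ≤ N + T := (Finset.card_image_le).trans (le_of_eq (Finset.card_range _))

lemma st_not_evp {w : W2} (h : St w) : ¬ EvP w := by
  intro hevp
  obtain ⟨K, hK1, hK⟩ := comp_bounded_of_evp hevp
  have := h K hK1
  have := hK K
  omega

lemma comp_mono (w : W2) (n : ℕ) : Comp w n ≤ Comp w (n+1) := by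
  have hsub : Factors w n ⊆ (fun f : Fin (n+1) → Fin 2 => f ∘ Fin.castSucc) '' Factors w (n+1) := by
    intro v hv
    rw [mem_factors_iff] at hv
    obtain ⟨i, rfl⟩ := hv
    refine ⟨win w i (n+1), win_mem w i (n+1), ?_⟩
    funext j
    simp [win, Function.comp]
  calc Comp w n = (Factors w n).ncard := rfl
    _ ≤ _ := Set.ncard_le_ncard hsub (Set.toFinite _)
    _ ≤ (Factors w (n+1)).ncard := Set.ncard_image_le (Set.toFinite _)

lemma comp_pos (w : W2) (n : ℕ) : 1 ≤ Comp w n := by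
  have : (Factors w n).Nonempty := ⟨win w 0 n, win_mem w 0 n⟩
  have h2 := (Set.ncard_pos (Set.toFinite (Factors w n))).2 this
  unfold Comp
  omega

end NilpAux

namespace CntAux
open scoped Classical

lemma CNT1 {γ δ : Type*} (s : Finset γ) (t : Finset δ) (ψ : γ → δ)
    (hmap : ∀ x ∈ s, ψ x ∈ t) (hsurj : ∀ y ∈ t, ∃ x ∈ s, ψ x = y)
    (R : Finset γ) (hRs : R ⊆ s) (v : δ) (hv : v ∈ t) (hRv : ∀ x ∈ R, ψ x = v) :
    t.card + R.card ≤ s.card + 1 := by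
  classical
  have hcard : s.card = ∑ y ∈ t, (s.filter fun x => ψ x = y).card :=
    Finset.card_eq_sum_card_fiberwise hmap
  have hfib : R.card ≤ (s.filter fun x => ψ x = v).card := by
    apply Finset.card_le_card
    intro x hx
    exact Finset.mem_filter.2 ⟨hRs hx, hRv x hx⟩
  have hrest : (t.erase v).card ≤ ∑ y ∈ t.erase v, (s.filter fun x => ψ x = y).card := by
    rw [Finset.card_eq_sum_ones (t.erase v)]
    apply Finset.sum_le_sum
    intro y hy
    obtain ⟨x, hx, hxy⟩ := hsurj y (Finset.mem_of_mem_erase hy)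
    have : x ∈ s.filter fun x => ψ x = y := Finset.mem_filter.2 ⟨hx, hxy⟩
    exact Finset.card_pos.2 ⟨x, this⟩
  have hsum : (s.filter fun x => ψ x = v).card + ∑ y ∈ t.erase v, (s.filter fun x => ψ x = y).card = s.card := by
    rw [hcard]
    exact Finset.add_sum_erase t (fun y => (s.filter fun x => ψ x = y).card) hv
  have hte : (t.erase v).card + 1 = t.card := Finset.card_erase_add_one hv
  omega

lemma CNT2 {γ δ : Type*} (s : Finset γ) (t : Finset δ) (ψ : γ → δ)
    (hmap : ∀ x ∈ s, ψ x ∈ t) (hsurj : ∀ y ∈ t, ∃ x ∈ s, ψ x = y)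
    (R R' : Finset γ) (hRs : R ⊆ s) (hRs' : R' ⊆ s)
    (v v' : δ) (hv : v ∈ t) (hv' : v' ∈ t) (hne : v ≠ v')
    (hRv : ∀ x ∈ R, ψ x = v) (hRv' : ∀ x ∈ R', ψ x = v') :
    t.card + R.card + R'.card ≤ s.card + 2 := by
  classical
  have hcard : s.card = ∑ y ∈ t, (s.filter fun x => ψ x = y).card :=
    Finset.card_eq_sum_card_fiberwise hmap
  have hfib : R.card ≤ (s.filter fun x => ψ x = v).card :=
    Finset.card_le_card (fun x hx => Finset.mem_filter.2 ⟨hRs hx, hRv x hx⟩)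
  have hfib' : R'.card ≤ (s.filter fun x => ψ x = v').card :=
    Finset.card_le_card (fun x hx => Finset.mem_filter.2 ⟨hRs' hx, hRv' x hx⟩)
  have hv'e : v' ∈ t.erase v := Finset.mem_erase.2 ⟨Ne.symm hne, hv'⟩
  have hrest : ((t.erase v).erase v').card ≤
      ∑ y ∈ (t.erase v).erase v', (s.filter fun x => ψ x = y).card := by
    rw [Finset.card_eq_sum_ones (((t.erase v).erase v'))]
    apply Finset.sum_le_sum
    intro y hy
    obtain ⟨x, hx, hxy⟩ := hsurj y (Finset.mem_of_mem_erase (Finset.mem_of_mem_erase hy))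
    exact Finset.card_pos.2 ⟨x, Finset.mem_filter.2 ⟨hx, hxy⟩⟩
  have hsum : (s.filter fun x => ψ x = v).card + ((s.filter fun x => ψ x = v').card
      + ∑ y ∈ (t.erase v).erase v', (s.filter fun x => ψ x = y).card) = s.card := by
    rw [hcard, ← Finset.add_sum_erase t (fun y => (s.filter fun x => ψ x = y).card) hv,
      ← Finset.add_sum_erase (t.erase v) (fun y => (s.filter fun x => ψ x = y).card) hv'e]
  have h1 : (t.erase v).card + 1 = t.card := Finset.card_erase_add_one hv
  have h2 : ((t.erase v).erase v').card + 1 = (t.erase v).card := Finset.card_erase_add_one hv'e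
  omega

end CntAux

namespace NilpAux
open CntAux
open scoped Classical

def shf (w : W2) (j : ℕ) : W2 := fun i => w (i + j)

lemma comp_zero (w : W2) : Comp w 0 = 1 := by
  have : Factors w 0 = Set.univ := by
    ext v
    simp only [Set.mem_univ, iff_true]
    exact ⟨0, fun j => j.elim0⟩
  rw [Comp, this, Set.ncard_univ]
  simp

lemma winExtR {w : W2} {i i' n : ℕ} (h : win w i n = win w i' n) (hl : w (i+n) = w (i'+n)) :
    win w (i+1) n = win w (i'+1) n := by
  rw [win_eq_iff] at h ⊢
  intro k hk
  rcases Nat.lt_or_ge (k+1) n with hk1 | hk1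
  · have := h (k+1) hk1
    have e1 : i + 1 + k = i + (k+1) := by omega
    have e2 : i' + 1 + k = i' + (k+1) := by omega
    rw [e1, e2]; exact this
  · have hkn : k + 1 = n := by omega
    have e1 : i + 1 + k = i + n := by omega
    have e2 : i' + 1 + k = i' + n := by omega
    rw [e1, e2]; exact hl

lemma winExtL {w : W2} {i i' n : ℕ} (h : win w (i+1) n = win w (i'+1) n) (hl : w i = w i') :
    win w i n = win w i' n := by
  rw [win_eq_iff] at h ⊢
  intro k hk
  rcases Nat.eq_zero_or_pos k with rfl | hk0
  · simpa using hl
  · have := h (k-1) (by omega)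
    have e1 : i + k = i + 1 + (k-1) := by omega
    have e2 : i' + k = i' + 1 + (k-1) := by omega
    rw [e1, e2]; exact this

lemma win_prefix (w : W2) (i n : ℕ) : (win w i (n+1)) ∘ Fin.castSucc = win w i n := by
  funext j
  simp [win, Function.comp, Fin.coe_castSucc]

lemma win_suffix (w : W2) (i n : ℕ) : (win w i (n+1)) ∘ Fin.succ = win w (i+1) n := by
  funext j
  simp only [win, Function.comp, Fin.val_succ]
  congr 1
  omega

/-- Morse–Hedlund: low complexity implies eventual periodicity. -/
lemma MH {w : W2} (n₀ : ℕ) (h1 : 1 ≤ n₀) (h : Comp w n₀ ≤ n₀) : EvP w := by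
  rcases Nat.eq_or_lt_of_le (comp_pos w 1) with hc1 | hc1
  · -- constant word
    obtain ⟨a, ha⟩ := Set.ncard_eq_one.1 hc1.symm
    refine ⟨0, 1, by omega, fun i _ => ?_⟩
    have h1' : win w i 1 = a := by
      have := win_mem w i 1; rw [ha] at this; exact this
    have h2' : win w (i+1) 1 = a := by
      have := win_mem w (i+1) 1; rw [ha] at this; exact this
    have := congrFun (h1'.trans h2'.symm) ⟨0, by omega⟩
    simpa [win] using this.symm
  -- there is a level where complexity stalls
  have hstall : ∃ k, 1 ≤ k ∧ k < n₀ ∧ Comp w (k+1) ≤ Comp w k := by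
    by_contra hcon
    push_neg at hcon
    have grow : ∀ k, k ≤ n₀ - 1 → k + 2 ≤ Comp w (k+1) := by
      intro k hk
      induction k with
      | zero => simp only [Nat.zero_add]; omega
      | succ k ih =>
          have h3 := hcon (k+1) (by omega) (by omega)
          have := ih (by omega)
          omega
    have := grow (n₀ - 1) (le_refl _)
    have e : n₀ - 1 + 1 = n₀ := by omega
    rw [e] at this
    omega
  obtain ⟨k, hk1, hkn, hkc⟩ := hstall
  -- determinism
  have det : ∀ i i', win w i k = win w i' k → w (i+k) = w (i'+k) := by
    intro i i' he
    by_contra hne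
    have hcnt := CNT1 (Fset w (k+1)) (Fset w k) (fun f => f ∘ Fin.castSucc)
      (fun x hx => by
        obtain ⟨j, rfl⟩ := mem_factors_iff.1 (mem_Fset.1 hx)
        show win w j (k+1) ∘ Fin.castSucc ∈ Fset w k
        rw [win_prefix]
        exact mem_Fset.2 (win_mem w j k))
      (fun y hy => by
        obtain ⟨j, rfl⟩ := mem_factors_iff.1 (mem_Fset.1 hy)
        exact ⟨win w j (k+1), mem_Fset.2 (win_mem w j (k+1)), win_prefix w j k⟩)
      {win w i (k+1), win w i' (k+1)} (by
        intro x hx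
        simp only [Finset.mem_insert, Finset.mem_singleton] at hx
        rcases hx with rfl | rfl <;> exact mem_Fset.2 (win_mem _ _ _))
      (win w i k) (mem_Fset.2 (win_mem w i k))
      (by
        intro x hx
        simp only [Finset.mem_insert, Finset.mem_singleton] at hx
        rcases hx with rfl | rfl
        · exact win_prefix w i k
        · show win w i' (k+1) ∘ Fin.castSucc = win w i k
          rw [win_prefix]; exact he.symm)
    have hcard2 : ({win w i (k+1), win w i' (k+1)} : Finset (Fin (k+1) → Fin 2)).card = 2 := by
      rw [Finset.card_insert_of_notMem, Finset.card_singleton]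
      simp only [Finset.mem_singleton]
      intro hcontra
      have := congrFun hcontra ⟨k, by omega⟩
      simp only [win] at this
      exact hne this
    rw [hcard2, card_Fset, card_Fset] at hcnt
    omega
  -- pigeonhole on windows of length k
  have hpig : ∃ i i', i < i' ∧ win w i k = win w i' k := by
    have hcard : (Fintype.card (Fin k → Fin 2)) < (Finset.range (2^k + 1)).card := by
      simp [Fintype.card_fun]
    obtain ⟨i, hi, i', hi', hne, he⟩ :=
      Finset.exists_ne_map_eq_of_card_lt_of_maps_to hcard
        (fun i _ => Finset.mem_univ (win w i k))
    rcases Nat.lt_or_ge i i' with hlt | hge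
    · exact ⟨i, i', hlt, he⟩
    · exact ⟨i', i, by omega, he.symm⟩
  obtain ⟨i, i', hlt, he⟩ := hpig
  have hiter : ∀ d, win w (i+d) k = win w (i'+d) k := by
    intro d
    induction d with
    | zero => simpa using he
    | succ d ih =>
        have := winExtR ih (det _ _ ih)
        have e1 : i + (d+1) = i + d + 1 := by omega
        have e2 : i' + (d+1) = i' + d + 1 := by omega
        rw [e1, e2]; exact this
  refine ⟨i, i' - i, by omega, fun j hj => ?_⟩
  have := congrFun (hiter (j - i)) ⟨0, by omega⟩
  simp only [win] at this
  have e1 : i + (j - i) + (0:ℕ) = j := by omega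
  have e2 : i' + (j - i) + (0:ℕ) = j + (i' - i) := by omega
  rw [e1, e2] at this
  exact this.symm

lemma st_shf {w : W2} (hst : St w) : (∀ n, Factors (shf w 1) n = Factors w n) ∧ St (shf w 1) := by
  have hsub : ∀ n, Factors (shf w 1) n ⊆ Factors w n := by
    intro n v hv
    obtain ⟨i, rfl⟩ := mem_factors_iff.1 hv
    rw [mem_factors_iff]
    refine ⟨i+1, ?_⟩
    funext k
    simp only [win, shf]
    congr 1
    omega
  have heq : ∀ n, Factors (shf w 1) n = Factors w n := by
    intro n
    rcases Nat.eq_zero_or_pos n with rfl | hn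
    · ext v
      constructor
      · intro _; exact ⟨0, fun j => j.elim0⟩
      · intro _; exact ⟨0, fun j => j.elim0⟩
    · by_contra hne
      have hss : Factors (shf w 1) n ⊂ Factors w n := ⟨hsub n, fun h => hne (le_antisymm (hsub n) h)⟩
      have hlt : Comp (shf w 1) n < Comp w n := Set.ncard_lt_ncard hss (Set.toFinite _)
      rw [hst n hn] at hlt
      have hevp : EvP (shf w 1) := MH n hn (by omega)
      obtain ⟨N, T, hT, hper⟩ := hevp
      apply st_not_evp hst
      refine ⟨N+1, T, hT, fun j hj => ?_⟩
      have := hper (j-1) (by omega)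
      simp only [shf] at this
      have e1 : j - 1 + T + 1 = j + T := by omega
      have e2 : j - 1 + 1 = j := by omega
      rw [e1, e2] at this
      exact this
  refine ⟨heq, fun n hn => ?_⟩
  rw [← hst n hn]
  unfold Comp
  rw [heq n]

lemma recur_aux : ∀ (N : ℕ) (w : W2), St w → ∀ n i, ∃ j, N ≤ j ∧ win w j n = win w i n := by
  intro N
  induction N with
  | zero => intro w _ n i; exact ⟨i, by omega, rfl⟩
  | succ N ih =>
      intro w hst n i
      obtain ⟨heq, hst'⟩ := st_shf hst
      have hv : win w i n ∈ Factors (shf w 1) n := by rw [heq n]; exact win_mem w i n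
      obtain ⟨i', hi'⟩ := mem_factors_iff.1 hv
      obtain ⟨j, hj, hje⟩ := ih (shf w 1) hst' n i'
      refine ⟨j+1, by omega, ?_⟩
      have h1 : win w (j+1) n = win (shf w 1) j n := by
        funext k
        simp only [win, shf]
        congr 1
        omega
      rw [h1, hje, ← hi']

lemma recur {w : W2} (hst : St w) (n i N : ℕ) : ∃ j, N ≤ j ∧ win w j n = win w i n :=
  recur_aux N w hst n i

end NilpAux

namespace NilpAux
open CntAux
open scoped Classical

lemma win_mid (w : W2) (i n : ℕ) :
    (fun k : Fin n => (win w i (n+2)) ⟨k+1, by omega⟩) = win w (i+1) n := by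
  funext k
  simp only [win]
  congr 1
  omega

/-- Unique left-special factor. -/
lemma ls_unique {w : W2} (hst : St w) {n : ℕ} {j1 j2 j1' j2' : ℕ}
    (h1 : 1 ≤ j1) (h2 : 1 ≤ j2) (h1' : 1 ≤ j1') (h2' : 1 ≤ j2')
    (e1 : win w j1 n = win w j2 n) (e1' : win w j1' n = win w j2' n)
    (d : w (j1 - 1) ≠ w (j2 - 1)) (d' : w (j1' - 1) ≠ w (j2' - 1)) :
    win w j1 n = win w j1' n := by
  rcases Nat.eq_zero_or_pos n with rfl | hn
  · funext j; exact j.elim0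
  by_contra hne
  have hsuf : ∀ j : ℕ, 1 ≤ j → win w (j-1) (n+1) ∘ Fin.succ = win w j n := by
    intro j hj
    have e : j - 1 + 1 = j := by omega
    rw [win_suffix, e]
  have hcnt := CNT2 (Fset w (n+1)) (Fset w n) (fun f => f ∘ Fin.succ)
    (fun x hx => by
      obtain ⟨j, rfl⟩ := mem_factors_iff.1 (mem_Fset.1 hx)
      show win w j (n+1) ∘ Fin.succ ∈ Fset w n
      rw [win_suffix]
      exact mem_Fset.2 (win_mem _ _ _))
    (fun y hy => by
      obtain ⟨j, rfl⟩ := mem_factors_iff.1 (mem_Fset.1 hy)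
      obtain ⟨j', hj', he'⟩ := recur hst n j 1
      exact ⟨win w (j'-1) (n+1), mem_Fset.2 (win_mem _ _ _), by
        show win w (j'-1) (n+1) ∘ Fin.succ = win w j n
        rw [hsuf j' hj', he']⟩)
    {win w (j1-1) (n+1), win w (j2-1) (n+1)}
    {win w (j1'-1) (n+1), win w (j2'-1) (n+1)}
    (by
      intro x hx
      simp only [Finset.mem_insert, Finset.mem_singleton] at hx
      rcases hx with rfl | rfl <;> exact mem_Fset.2 (win_mem _ _ _))
    (by
      intro x hx
      simp only [Finset.mem_insert, Finset.mem_singleton] at hx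
      rcases hx with rfl | rfl <;> exact mem_Fset.2 (win_mem _ _ _))
    (win w j1 n) (win w j1' n)
    (mem_Fset.2 (win_mem _ _ _)) (mem_Fset.2 (win_mem _ _ _)) hne
    (by
      intro x hx
      simp only [Finset.mem_insert, Finset.mem_singleton] at hx
      rcases hx with rfl | rfl
      · show win w (j1-1) (n+1) ∘ Fin.succ = win w j1 n
        exact hsuf j1 h1
      · show win w (j2-1) (n+1) ∘ Fin.succ = win w j1 n
        rw [hsuf j2 h2]; exact e1.symm)
    (by
      intro x hx
      simp only [Finset.mem_insert, Finset.mem_singleton] at hx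
      rcases hx with rfl | rfl
      · show win w (j1'-1) (n+1) ∘ Fin.succ = win w j1' n
        exact hsuf j1' h1'
      · show win w (j2'-1) (n+1) ∘ Fin.succ = win w j1' n
        rw [hsuf j2' h2']; exact e1'.symm)
  have hc2 : ({win w (j1-1) (n+1), win w (j2-1) (n+1)} : Finset (Fin (n+1) → Fin 2)).card = 2 := by
    rw [Finset.card_insert_of_notMem, Finset.card_singleton]
    simp only [Finset.mem_singleton]
    intro hco
    have := congrFun hco ⟨0, by omega⟩
    simp only [win, Nat.add_zero] at this
    exact d this
  have hc2' : ({win w (j1'-1) (n+1), win w (j2'-1) (n+1)} : Finset (Fin (n+1) → Fin 2)).card = 2 := by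
    rw [Finset.card_insert_of_notMem, Finset.card_singleton]
    simp only [Finset.mem_singleton]
    intro hco
    have := congrFun hco ⟨0, by omega⟩
    simp only [win, Nat.add_zero] at this
    exact d' this
  rw [hc2, hc2', card_Fset, card_Fset] at hcnt
  rw [hst n hn, hst (n+1) (by omega)] at hcnt
  omega

/-- Unique right-special factor. -/
lemma rs_unique {w : W2} (hst : St w) {n : ℕ} {j1 j2 j1' j2' : ℕ}
    (e1 : win w j1 n = win w j2 n) (e1' : win w j1' n = win w j2' n)
    (d : w (j1 + n) ≠ w (j2 + n)) (d' : w (j1' + n) ≠ w (j2' + n)) :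
    win w j1 n = win w j1' n := by
  rcases Nat.eq_zero_or_pos n with rfl | hn
  · funext j; exact j.elim0
  by_contra hne
  have hcnt := CNT2 (Fset w (n+1)) (Fset w n) (fun f => f ∘ Fin.castSucc)
    (fun x hx => by
      obtain ⟨j, rfl⟩ := mem_factors_iff.1 (mem_Fset.1 hx)
      show win w j (n+1) ∘ Fin.castSucc ∈ Fset w n
      rw [win_prefix]
      exact mem_Fset.2 (win_mem _ _ _))
    (fun y hy => by
      obtain ⟨j, rfl⟩ := mem_factors_iff.1 (mem_Fset.1 hy)
      exact ⟨win w j (n+1), mem_Fset.2 (win_mem _ _ _), win_prefix w j n⟩)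
    {win w j1 (n+1), win w j2 (n+1)}
    {win w j1' (n+1), win w j2' (n+1)}
    (by
      intro x hx
      simp only [Finset.mem_insert, Finset.mem_singleton] at hx
      rcases hx with rfl | rfl <;> exact mem_Fset.2 (win_mem _ _ _))
    (by
      intro x hx
      simp only [Finset.mem_insert, Finset.mem_singleton] at hx
      rcases hx with rfl | rfl <;> exact mem_Fset.2 (win_mem _ _ _))
    (win w j1 n) (win w j1' n)
    (mem_Fset.2 (win_mem _ _ _)) (mem_Fset.2 (win_mem _ _ _)) hne
    (by
      intro x hx
      simp only [Finset.mem_insert, Finset.mem_singleton] at hx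
      rcases hx with rfl | rfl
      · exact win_prefix w j1 n
      · show win w j2 (n+1) ∘ Fin.castSucc = win w j1 n
        rw [win_prefix]; exact e1.symm)
    (by
      intro x hx
      simp only [Finset.mem_insert, Finset.mem_singleton] at hx
      rcases hx with rfl | rfl
      · exact win_prefix w j1' n
      · show win w j2' (n+1) ∘ Fin.castSucc = win w j1' n
        rw [win_prefix]; exact e1'.symm)
  have hc2 : ({win w j1 (n+1), win w j2 (n+1)} : Finset (Fin (n+1) → Fin 2)).card = 2 := by
    rw [Finset.card_insert_of_notMem, Finset.card_singleton]
    simp only [Finset.mem_singleton]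
    intro hco
    have := congrFun hco ⟨n, by omega⟩
    simp only [win] at this
    exact d this
  have hc2' : ({win w j1' (n+1), win w j2' (n+1)} : Finset (Fin (n+1) → Fin 2)).card = 2 := by
    rw [Finset.card_insert_of_notMem, Finset.card_singleton]
    simp only [Finset.mem_singleton]
    intro hco
    have := congrFun hco ⟨n, by omega⟩
    simp only [win] at this
    exact d' this
  rw [hc2, hc2', card_Fset, card_Fset] at hcnt
  rw [hst n hn, hst (n+1) (by omega)] at hcnt
  omega

/-- Not all four two-sided extensions of a factor can occur. -/
lemma four_not {w : W2} (hst : St w) {n : ℕ} (p : ℕ)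
    (hocc : ∀ a b : Fin 2, ∃ j, 1 ≤ j ∧ win w j n = win w p n ∧ w (j-1) = a ∧ w (j+n) = b) :
    False := by
  choose jf hjf1 hjfe hjfa hjfb using hocc
  have hwinm : ∀ a b : Fin 2, (fun k : Fin n => (win w (jf a b - 1) (n+2)) ⟨k+1, by omega⟩)
      = win w p n := by
    intro a b
    rw [win_mid]
    have h1 := hjf1 a b
    have e : jf a b - 1 + 1 = jf a b := by omega
    rw [e]
    exact hjfe a b
  -- the four windows of length n+2
  set X : Fin 2 → Fin 2 → (Fin (n+2) → Fin 2) := fun a b => win w (jf a b - 1) (n+2) with hX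
  have hX0 : ∀ a b, X a b ⟨0, by omega⟩ = a := by
    intro a b
    simp only [hX, win, Nat.add_zero]
    exact hjfa a b
  have hXlast : ∀ a b, X a b ⟨n+1, by omega⟩ = b := by
    intro a b
    simp only [hX, win]
    have e : jf a b - 1 + (n+1) = jf a b + n := by
      have := hjf1 a b; omega
    rw [e]
    exact hjfb a b
  have hXne : ∀ a b a' b', (a,b) ≠ (a',b') → X a b ≠ X a' b' := by
    intro a b a' b' hne hco
    apply hne
    have h0 := (congrFun hco ⟨0, by omega⟩)
    have hl := (congrFun hco ⟨n+1, by omega⟩)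
    rw [hX0, hX0] at h0
    rw [hXlast, hXlast] at hl
    rw [h0, hl]
  have hcard4 : ({X 0 0, X 0 1, X 1 0, X 1 1} : Finset (Fin (n+2) → Fin 2)).card = 4 := by
    rw [Finset.card_insert_of_notMem, Finset.card_insert_of_notMem,
      Finset.card_insert_of_notMem, Finset.card_singleton]
    · simp only [Finset.mem_singleton]
      exact hXne 1 0 1 1 (by decide)
    · simp only [Finset.mem_insert, Finset.mem_singleton]
      push_neg
      exact ⟨hXne 0 1 1 0 (by decide), hXne 0 1 1 1 (by decide)⟩
    · simp only [Finset.mem_insert, Finset.mem_singleton]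
      push_neg
      refine ⟨hXne 0 0 0 1 (by decide), hXne 0 0 1 0 (by decide), hXne 0 0 1 1 (by decide)⟩
  have hcnt := CNT1 (Fset w (n+2)) (Fset w n)
    (fun f => fun k : Fin n => f ⟨k+1, by omega⟩)
    (fun x hx => by
      obtain ⟨j, rfl⟩ := mem_factors_iff.1 (mem_Fset.1 hx)
      show (fun k : Fin n => (win w j (n+2)) ⟨k+1, by omega⟩) ∈ Fset w n
      rw [win_mid]
      exact mem_Fset.2 (win_mem _ _ _))
    (fun y hy => by
      obtain ⟨j, rfl⟩ := mem_factors_iff.1 (mem_Fset.1 hy)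
      obtain ⟨j', hj', he'⟩ := recur hst n j 1
      refine ⟨win w (j'-1) (n+2), mem_Fset.2 (win_mem _ _ _), ?_⟩
      show (fun k : Fin n => (win w (j'-1) (n+2)) ⟨k+1, by omega⟩) = win w j n
      rw [win_mid]
      have e : j' - 1 + 1 = j' := by omega
      rw [e, he'])
    {X 0 0, X 0 1, X 1 0, X 1 1}
    (by
      intro x hx
      simp only [Finset.mem_insert, Finset.mem_singleton] at hx
      rcases hx with rfl | rfl | rfl | rfl <;> exact mem_Fset.2 (win_mem _ _ _))
    (win w p n) (mem_Fset.2 (win_mem _ _ _))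
    (by
      intro x hx
      simp only [Finset.mem_insert, Finset.mem_singleton] at hx
      rcases hx with rfl | rfl | rfl | rfl <;> exact hwinm _ _)
  rw [hcard4, card_Fset, card_Fset] at hcnt
  have hn2 : Comp w (n+2) = n + 3 := hst (n+2) (by omega)
  have hnlow : n + 1 ≤ Comp w n := by
    rcases Nat.eq_zero_or_pos n with rfl | hn
    · simp [comp_zero]
    · rw [hst n hn]
  omega

end NilpAux

namespace NilpAux
open scoped Classical

lemma fin2_eq_of_ne {a c d : Fin 2} (hcd : c ≠ d) (h : a ≠ c) : a = d := by
  fin_cases a <;> fin_cases c <;> fin_cases d <;> simp_all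

lemma endgame {w : W2} (hst : St w) {n : ℕ} (hn : 1 ≤ n) (t₀ : ℕ)
    (hpal : ∀ j, j < n → w (t₀ + j) = w (t₀ + (n - 1 - j)))
    (c d : Fin 2) (hcd : c ≠ d)
    (pC pD : ℕ)
    (hC1 : win w (pC+1) n = win w t₀ n) (hC2 : w pC = c) (hC3 : w (pC+1+n) = c)
    (hD1 : win w (pD+1) n = win w t₀ n) (hD2 : w pD = d) (hD3 : w (pD+1+n) = d)
    (hmiss : ∀ j, 1 ≤ j → win w j n = win w t₀ n → w (j-1) = c → w (j+n) = c) :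
    False := by
  have hRS : ∀ j j', win w j n = win w j' n → win w j n ≠ win w t₀ n →
      w (j+n) = w (j'+n) := by
    intro j j' he hne
    by_contra hd
    have hTd : w (pC+1+n) ≠ w (pD+1+n) := by rw [hC3, hD3]; exact hcd
    have := rs_unique hst he (hC1.trans hD1.symm) hd hTd
    exact hne (this.trans hC1)
  have hLS : ∀ j j', 1 ≤ j → 1 ≤ j' → win w j n = win w j' n →
      win w j n ≠ win w t₀ n → w (j-1) = w (j'-1) := by
    intro j j' hj hj' he hne
    by_contra hd
    have hTd : w (pC+1-1) ≠ w (pD+1-1) := by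
      simp only [Nat.add_sub_cancel]
      rw [hC2, hD2]; exact hcd
    have := ls_unique hst hj hj' (by omega) (by omega) he (hC1.trans hD1.symm) hd hTd
    exact hne (this.trans hC1)
  have killer_c : (∀ k, k < n → w (t₀ + k) = c) → False := by
    intro hTc
    have evc : ∀ k, w (pC + k) = c := by
      intro k
      induction k using Nat.strong_induction_on with
      | _ k ih =>
        rcases Nat.eq_zero_or_pos k with rfl | hk0
        · simpa using hC2
        rcases Nat.lt_or_ge k (n+1) with hk | hk
        · have h := (win_eq_iff.1 hC1) (k-1) (by omega)
          have e : pC + 1 + (k-1) = pC + k := by omega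
          rw [e] at h
          rw [h]
          exact hTc (k-1) (by omega)
        rcases Nat.eq_or_lt_of_le hk with hk1 | hk1
        · have e : pC + k = pC + 1 + n := by omega
          rw [e]; exact hC3
        have hO : win w (pC + k - n) n = win w t₀ n := by
          rw [win_eq_iff]
          intro l hl
          rw [hTc l hl]
          have e : pC + k - n + l = pC + (k - n + l) := by omega
          rw [e]
          exact ih (k - n + l) (by omega)
        have hprev : w (pC + k - n - 1) = c := by
          have e : pC + k - n - 1 = pC + (k - n - 1) := by omega
          rw [e]
          exact ih (k - n - 1) (by omega)
        have h := hmiss (pC + k - n) (by omega) hO hprev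
        have e : pC + k - n + n = pC + k := by omega
        rw [e] at h
        exact h
    apply st_not_evp hst
    refine ⟨pC, 1, by omega, fun j hj => ?_⟩
    have h1 : w j = c := by
      have e : j = pC + (j - pC) := by omega
      rw [e]; exact evc _
    have h2 : w (j+1) = c := by
      have e : j + 1 = pC + (j + 1 - pC) := by omega
      rw [e]; exact evc _
    rw [h1, h2]
  have killer_d : (∀ k, k < n → w (t₀ + k) = d) → False := by
    intro hTd
    have hwinD : ∀ l, l < n+2 → w (pD + l) = d := by
      intro l hl
      rcases Nat.eq_zero_or_pos l with rfl | hl0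
      · simpa using hD2
      rcases Nat.lt_or_ge l (n+1) with hl1 | hl1
      · have h := (win_eq_iff.1 hD1) (l-1) (by omega)
        have e : pD + 1 + (l-1) = pD + l := by omega
        rw [e] at h
        rw [h]; exact hTd (l-1) (by omega)
      · have e : pD + l = pD + 1 + n := by omega
        rw [e]; exact hD3
    have hall : ∀ K, w K = d := by
      intro K
      obtain ⟨j, hjK, hje⟩ := recur hst (n+2) pD K
      have hjd : ∀ l, l < n + 2 → w (j + l) = d := by
        intro l hl
        rw [(win_eq_iff.1 hje) l hl]
        exact hwinD l hl
      have back : ∀ m, ∀ k, j - m ≤ k → k ≤ j + n + 1 → w k = d := by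
        intro m
        induction m with
        | zero =>
            intro k hk1 hk2
            have e : k = j + (k - j) := by omega
            rw [e]; exact hjd _ (by omega)
        | succ m ih =>
            intro k hk1 hk2
            rcases Nat.lt_or_ge k (j - m) with hk | hk
            · have hjm : 1 ≤ j - m := by omega
              have hkk : k = j - m - 1 := by omega
              have hO : win w (j - m) n = win w t₀ n := by
                rw [win_eq_iff]
                intro l hl
                rw [hTd l hl]
                exact ih (j - m + l) (by omega) (by omega)
              have hrn : w (j - m + n) = d := ih (j - m + n) (by omega) (by omega)
              by_cases hc : w (j - m - 1) = c
              · have h := hmiss (j - m) hjm hO hc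
                rw [hrn] at h
                exact absurd h.symm hcd
              · rw [hkk]
                exact fin2_eq_of_ne hcd hc
            · exact ih k hk hk2
      exact back j K (by omega) (by omega)
    apply st_not_evp hst
    exact ⟨0, 1, by omega, fun j _ => by rw [hall, hall]⟩
  -- next occurrences
  have nextOcc : ∀ i, win w i n = win w t₀ n →
      ∃ p, 1 ≤ p ∧ win w (i+p) n = win w t₀ n ∧
        ∀ r, 0 < r → r < p → win w (i+r) n ≠ win w t₀ n := by
    intro i hO
    obtain ⟨j, hj, hje⟩ := recur hst n i (i+1)
    have hex : ∃ m, win w (i + (m+1)) n = win w t₀ n := ⟨j - i - 1, by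
      have e : i + (j - i - 1 + 1) = j := by omega
      rw [e, hje, hO]⟩
    have hfind := Nat.find_spec hex
    refine ⟨Nat.find hex + 1, by omega, hfind, fun r hr1 hr2 => ?_⟩
    have h := Nat.find_min hex (m := r - 1) (by omega)
    have e : r - 1 + 1 = r := by omega
    rw [e] at h
    exact h
  obtain ⟨p, hp1, hOp, hIntp⟩ := nextOcc (pC+1) hC1
  obtain ⟨q, hq1, hOq, hIntq⟩ := nextOcc (pD+1) hD1
  -- p ≥ 2
  have hp2 : 2 ≤ p := by
    by_contra hp
    have hp' : p = 1 := by omega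
    rw [hp'] at hOp
    apply killer_c
    have step : ∀ k, k + 1 < n → w (t₀+k) = w (t₀+(k+1)) := by
      intro k hk
      have h1 := (win_eq_iff.1 hOp) k (by omega)
      have h2 := (win_eq_iff.1 hC1) (k+1) hk
      have e : pC + 1 + 1 + k = pC + 1 + (k + 1) := by omega
      rw [e] at h1
      rw [← h1, h2]
    have top : w (t₀ + (n-1)) = c := by
      have h1 := (win_eq_iff.1 hOp) (n-1) (by omega)
      have e : pC + 1 + 1 + (n-1) = pC + 1 + n := by omega
      rw [e] at h1
      rw [← h1, hC3]
    have all : ∀ m, m < n → w (t₀ + (n - 1 - m)) = c := by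
      intro m
      induction m with
      | zero => intro _; simpa using top
      | succ m ih =>
          intro hm
          have hstep := step (n - 1 - (m+1)) (by omega)
          have e : n - 1 - (m+1) + 1 = n - 1 - m := by omega
          rw [e] at hstep
          rw [hstep]
          exact ih (by omega)
    intro k hk
    have h := all (n - 1 - k) (by omega)
    have e : n - 1 - (n - 1 - k) = k := by omega
    rw [e] at h
    exact h
  -- q ≥ 2
  have hq2 : 2 ≤ q := by
    by_contra hq
    have hq' : q = 1 := by omega
    rw [hq'] at hOq
    apply killer_d
    have step : ∀ k, k + 1 < n → w (t₀+k) = w (t₀+(k+1)) := by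
      intro k hk
      have h1 := (win_eq_iff.1 hOq) k (by omega)
      have h2 := (win_eq_iff.1 hD1) (k+1) hk
      have e : pD + 1 + 1 + k = pD + 1 + (k + 1) := by omega
      rw [e] at h1
      rw [← h1, h2]
    have top : w (t₀ + (n-1)) = d := by
      have h1 := (win_eq_iff.1 hOq) (n-1) (by omega)
      have e : pD + 1 + 1 + (n-1) = pD + 1 + n := by omega
      rw [e] at h1
      rw [← h1, hD3]
    have all : ∀ m, m < n → w (t₀ + (n - 1 - m)) = d := by
      intro m
      induction m with
      | zero => intro _; simpa using top
      | succ m ih =>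
          intro hm
          have hstep := step (n - 1 - (m+1)) (by omega)
          have e : n - 1 - (m+1) + 1 = n - 1 - m := by omega
          rw [e] at hstep
          rw [hstep]
          exact ih (by omega)
    intro k hk
    have h := all (n - 1 - k) (by omega)
    have e : n - 1 - (n - 1 - k) = k := by omega
    rw [e] at h
    exact h
  -- backward step
  have bstep : ∀ j j', 1 ≤ j → 1 ≤ j' → win w j n = win w j' n →
      win w j n ≠ win w t₀ n → win w (j-1) n = win w (j'-1) n := by
    intro j j' hj hj' he hne
    have hl := hLS j j' hj hj' he hne
    apply winExtL (i := j-1) (i' := j'-1)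
    · have e1 : j - 1 + 1 = j := by omega
      have e2 : j' - 1 + 1 = j' := by omega
      rw [e1, e2]; exact he
    · exact hl
  have AA : ∀ a', ∀ a, 1 ≤ a → a < a' → a' < p →
      win w (pC+1+a) n ≠ win w (pC+1+a') n := by
    intro a'
    induction a' using Nat.strong_induction_on with
    | _ a' ih =>
      intro a ha1 ha2 ha3 he
      have hne : win w (pC+1+a) n ≠ win w t₀ n := hIntp a (by omega) (by omega)
      have hb := bstep (pC+1+a) (pC+1+a') (by omega) (by omega) he hne
      rcases Nat.eq_or_lt_of_le ha1 with h1 | h1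
      · have e1 : pC+1+a - 1 = pC+1 := by omega
        have e2 : pC+1+a' - 1 = pC+1 + (a' - 1) := by omega
        rw [e1, e2] at hb
        exact hIntp (a'-1) (by omega) (by omega) (hb.symm.trans hC1)
      · have e1 : pC+1+a - 1 = pC+1 + (a-1) := by omega
        have e2 : pC+1+a' - 1 = pC+1 + (a'-1) := by omega
        rw [e1, e2] at hb
        exact ih (a'-1) (by omega) (a-1) (by omega) (by omega) (by omega) hb
  have BB : ∀ b', ∀ b, 1 ≤ b → b < b' → b' < q →
      win w (pD+1+b) n ≠ win w (pD+1+b') n := by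
    intro b'
    induction b' using Nat.strong_induction_on with
    | _ b' ih =>
      intro b hb1 hb2 hb3 he
      have hne : win w (pD+1+b) n ≠ win w t₀ n := hIntq b (by omega) (by omega)
      have hb' := bstep (pD+1+b) (pD+1+b') (by omega) (by omega) he hne
      rcases Nat.eq_or_lt_of_le hb1 with h1 | h1
      · have e1 : pD+1+b - 1 = pD+1 := by omega
        have e2 : pD+1+b' - 1 = pD+1 + (b' - 1) := by omega
        rw [e1, e2] at hb'
        exact hIntq (b'-1) (by omega) (by omega) (hb'.symm.trans hD1)
      · have e1 : pD+1+b - 1 = pD+1 + (b-1) := by omega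
        have e2 : pD+1+b' - 1 = pD+1 + (b'-1) := by omega
        rw [e1, e2] at hb'
        exact ih (b'-1) (by omega) (b-1) (by omega) (by omega) (by omega) hb'
  have AB : ∀ a, ∀ b, 1 ≤ a → a < p → 1 ≤ b → b < q →
      win w (pC+1+a) n ≠ win w (pD+1+b) n := by
    intro a
    induction a using Nat.strong_induction_on with
    | _ a ih =>
      intro b ha1 ha2 hb1 hb2 he
      rcases Nat.eq_or_lt_of_le ha1 with ha | ha
      · rcases Nat.eq_or_lt_of_le hb1 with hb | hb
        · -- a = b = 1 : last letters differ
          have h1 := (win_eq_iff.1 he) (n-1) (by omega)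
          have e1 : pC+1+a + (n-1) = pC + 1 + n := by omega
          have e2 : pD+1+b + (n-1) = pD + 1 + n := by omega
          rw [e1, e2, hC3, hD3] at h1
          exact hcd h1
        · have hne : win w (pC+1+a) n ≠ win w t₀ n := hIntp a (by omega) ha2
          have hb' := bstep (pC+1+a) (pD+1+b) (by omega) (by omega) he hne
          have e1 : pC+1+a - 1 = pC+1 := by omega
          have e2 : pD+1+b - 1 = pD+1 + (b-1) := by omega
          rw [e1, e2] at hb'
          exact hIntq (b-1) (by omega) (by omega) (hb'.symm.trans hC1)
      · rcases Nat.eq_or_lt_of_le hb1 with hb | hb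
        · have hne : win w (pC+1+a) n ≠ win w t₀ n := hIntp a (by omega) ha2
          have hb' := bstep (pC+1+a) (pD+1+b) (by omega) (by omega) he hne
          have e1 : pC+1+a - 1 = pC+1 + (a-1) := by omega
          have e2 : pD+1+b - 1 = pD+1 := by omega
          rw [e1, e2] at hb'
          exact hIntp (a-1) (by omega) (by omega) (hb'.trans hD1)
        · have hne : win w (pC+1+a) n ≠ win w t₀ n := hIntp a (by omega) ha2
          have hb' := bstep (pC+1+a) (pD+1+b) (by omega) (by omega) he hne
          have e1 : pC+1+a - 1 = pC+1 + (a-1) := by omega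
          have e2 : pD+1+b - 1 = pD+1 + (b-1) := by omega
          rw [e1, e2] at hb'
          exact ih (a-1) (by omega) (b-1) (by omega) (by omega) (by omega) (by omega) hb'
  -- counting
  have hpq : p + q ≤ n + 2 := by
    classical
    set A : Finset (Fin n → Fin 2) := (Finset.Ico 1 p).image (fun a => win w (pC+1+a) n) with hA
    set B : Finset (Fin n → Fin 2) := (Finset.Ico 1 q).image (fun b => win w (pD+1+b) n) with hB
    have hAcard : A.card = p - 1 := by
      rw [hA, Finset.card_image_of_injOn, Nat.card_Ico]
      intro x hx y hy hxy
      simp only [Finset.coe_Ico, Set.mem_Ico] at hx hy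
      by_contra hne
      rcases Nat.lt_or_ge x y with h | h
      · exact AA y x hx.1 h hy.2 hxy
      · exact AA x y hy.1 (by omega) hx.2 hxy.symm
    have hBcard : B.card = q - 1 := by
      rw [hB, Finset.card_image_of_injOn, Nat.card_Ico]
      intro x hx y hy hxy
      simp only [Finset.coe_Ico, Set.mem_Ico] at hx hy
      by_contra hne
      rcases Nat.lt_or_ge x y with h | h
      · exact BB y x hx.1 h hy.2 hxy
      · exact BB x y hy.1 (by omega) hx.2 hxy.symm
    have hdisj : Disjoint A B := by
      rw [Finset.disjoint_left]
      intro x hxA hxB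
      rw [hA, Finset.mem_image] at hxA
      rw [hB, Finset.mem_image] at hxB
      obtain ⟨a, ha, rfl⟩ := hxA
      obtain ⟨b, hb, he⟩ := hxB
      simp only [Finset.mem_Ico] at ha hb
      exact AB a b ha.1 ha.2 hb.1 hb.2 he.symm
    have hTA : win w t₀ n ∉ A := by
      rw [hA, Finset.mem_image]
      rintro ⟨a, ha, he⟩
      simp only [Finset.mem_Ico] at ha
      exact hIntp a (by omega) ha.2 he
    have hTB : win w t₀ n ∉ B := by
      rw [hB, Finset.mem_image]
      rintro ⟨b, hb, he⟩
      simp only [Finset.mem_Ico] at hb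
      exact hIntq b (by omega) hb.2 he
    have hsub : insert (win w t₀ n) (A ∪ B) ⊆ Fset w n := by
      intro x hx
      simp only [Finset.mem_insert, Finset.mem_union] at hx
      rcases hx with rfl | hx | hx
      · exact mem_Fset.2 (win_mem _ _ _)
      · rw [hA, Finset.mem_image] at hx
        obtain ⟨a, _, rfl⟩ := hx
        exact mem_Fset.2 (win_mem _ _ _)
      · rw [hB, Finset.mem_image] at hx
        obtain ⟨b, _, rfl⟩ := hx
        exact mem_Fset.2 (win_mem _ _ _)
    have hcard : (insert (win w t₀ n) (A ∪ B)).card = (p-1) + (q-1) + 1 := by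
      rw [Finset.card_insert_of_notMem (by
        simp only [Finset.mem_union]
        rintro (h | h)
        · exact hTA h
        · exact hTB h), Finset.card_union_of_disjoint hdisj, hAcard, hBcard]
    have hle := Finset.card_le_card hsub
    rw [hcard, card_Fset, hst n hn] at hle
    omega
  have hpn : p ≤ n := by omega
  -- the letter before the next occurrence is c
  have hpm1 : w (pC + 1 + (p-1)) = c := by
    have h1 := (win_eq_iff.1 hC1) (p-1) (by omega)
    have h2 := hpal (p-1) (by omega)
    have e : n - 1 - (p-1) = n - p := by omega
    rw [e] at h2
    have h3 := (win_eq_iff.1 hOp) (n-p) (by omega)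
    have e2 : pC + 1 + p + (n - p) = pC + 1 + n := by omega
    rw [e2] at h3
    rw [h1, h2, ← h3, hC3]
  -- propagation of type-c occurrences
  have CC : ∀ i, win w i n = win w t₀ n → w (i+n) = c →
      ∀ l, l ≤ p → win w (i+l) n = win w (pC+1+l) n := by
    intro i hO hc l
    induction l with
    | zero => intro _; simpa using hO.trans hC1.symm
    | succ l ihl =>
        intro hl
        have hwl := ihl (by omega)
        have hnext : w (i + l + n) = w (pC + 1 + l + n) := by
          rcases Nat.eq_zero_or_pos l with rfl | hl0
          · simp only [Nat.add_zero]
            rw [hc, hC3]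
          · exact hRS (i+l) (pC+1+l) hwl
              (by rw [hwl]; exact hIntp l hl0 (by omega))
        have h := winExtR hwl hnext
        have e1 : i + (l+1) = i + l + 1 := by omega
        have e2 : pC + 1 + (l+1) = pC + 1 + l + 1 := by omega
        rw [e1, e2]; exact h
  have CC2 : ∀ i, win w i n = win w t₀ n → w (i+n) = c →
      (win w (i+p) n = win w t₀ n ∧ w (i+p+n) = c ∧
        ∀ l, l < p → w (i+l) = w (pC+1+l)) := by
    intro i hO hc
    have hOip : win w (i+p) n = win w t₀ n := (CC i hO hc p (le_refl _)).trans hOp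
    have hlet : ∀ l, l < p → w (i+l) = w (pC+1+l) := by
      intro l hl
      have h := congrFun (CC i hO hc l (by omega)) ⟨0, by omega⟩
      simpa [win] using h
    have hprev : w (i+p-1) = c := by
      have h := hlet (p-1) (by omega)
      have e : i + (p-1) = i + p - 1 := by omega
      rw [e] at h
      rw [h, hpm1]
    exact ⟨hOip, hmiss (i+p) (by omega) hOip hprev, hlet⟩
  have iter : ∀ k, win w (pC + 1 + k*p) n = win w t₀ n ∧ w (pC + 1 + k*p + n) = c := by
    intro k
    induction k with
    | zero => simpa using ⟨hC1, hC3⟩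
    | succ k ih =>
        have h := CC2 _ ih.1 ih.2
        have e : pC + 1 + (k+1)*p = pC + 1 + k*p + p := by ring
        rw [e]
        exact ⟨h.1, h.2.1⟩
  have lets : ∀ k l, l < p → w (pC + 1 + k*p + l) = w (pC + 1 + l) :=
    fun k l hl => (CC2 _ (iter k).1 (iter k).2).2.2 l hl
  apply st_not_evp hst
  refine ⟨pC + 1, p, by omega, fun j hj => ?_⟩
  obtain ⟨k, l, hlp, hkl⟩ : ∃ k l, l < p ∧ j - (pC+1) = k * p + l := by
    refine ⟨(j - (pC+1)) / p, (j - (pC+1)) % p, Nat.mod_lt _ (by omega), ?_⟩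
    rw [Nat.mul_comm]
    exact (Nat.div_add_mod _ _).symm
  have e1 : j = pC + 1 + k*p + l := by omega
  have e2 : j + p = pC + 1 + (k+1)*p + l := by
    have : (k+1)*p = k*p + p := by ring
    omega
  have g1 : w j = w (pC + 1 + l) := by rw [e1]; exact lets k l hlp
  have g2 : w (j + p) = w (pC + 1 + l) := by rw [e2]; exact lets (k+1) l hlp
  rw [g1, g2]

end NilpAux

namespace NilpAux
open scoped Classical

lemma onesCnt_rev {w : W2} {a b j : ℕ} (h : ∀ k, k < j → w (a+k) = w (b + (j-1-k))) :
    onesCnt w a j = onesCnt w b j := by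
  unfold onesCnt
  apply Finset.card_bij' (i := fun k _ => j - 1 - k) (j := fun k _ => j - 1 - k)
  · intro k hk
    simp only [Finset.mem_filter, Finset.mem_range] at hk ⊢
    refine ⟨by omega, ?_⟩
    rw [← h k hk.1]
    exact hk.2
  · intro k hk
    simp only [Finset.mem_filter, Finset.mem_range] at hk ⊢
    refine ⟨by omega, ?_⟩
    have := h (j-1-k) (by omega)
    have e : j - 1 - (j-1-k) = k := by omega
    rw [e] at this
    rw [this]
    exact hk.2
  · intro k hk
    simp only [Finset.mem_filter, Finset.mem_range] at hk
    omega
  · intro k hk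
    simp only [Finset.mem_filter, Finset.mem_range] at hk
    omega

lemma balanced {w : W2} (hst : St w) : ∀ n i i', onesCnt w i n ≤ onesCnt w i' n + 1 := by
  by_contra hcon
  push_neg at hcon
  obtain ⟨n₀, i₀, i₀', hbad0⟩ := hcon
  have hex : ∃ L, ∃ a a', onesCnt w a' L + 2 ≤ onesCnt w a L := ⟨n₀, i₀, i₀', by omega⟩
  obtain ⟨i, i', hLbad⟩ := Nat.find_spec hex
  set L := Nat.find hex with hLdef
  have hmin : ∀ L', L' < L → ∀ a a', onesCnt w a L' ≤ onesCnt w a' L' + 1 := by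
    intro L' hL' a a'
    have h := Nat.find_min hex hL'
    push_neg at h
    have := h a a'
    omega
  have iteA : (if (0:Fin 2) = 1 then (1:ℕ) else 0) = 0 := if_neg (by decide)
  have iteB : (if (1:Fin 2) = 1 then (1:ℕ) else 0) = 1 := if_pos rfl
  have hL2 : 2 ≤ L := by
    have h1 := onesCnt_le w i L
    have h2 := onesCnt_le w i' L
    by_contra hL
    interval_cases L <;> omega
  set n := L - 2 with hndef
  have dfirst : ∀ a, onesCnt w a L = (if w a = 1 then 1 else 0) + onesCnt w (a+1) (L-1) := by
    intro a
    have h := onesCnt_add w a 1 (L-1)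
    rw [onesCnt_one] at h
    have e : 1 + (L-1) = L := by omega
    rw [e] at h
    exact h
  have dlastL : ∀ a, onesCnt w a L = onesCnt w a (L-1) + (if w (a+(L-1)) = 1 then 1 else 0) := by
    intro a
    have h := onesCnt_succ w a (L-1)
    have e : L - 1 + 1 = L := by omega
    rw [e] at h
    exact h
  -- first letters
  have hfl : w i = 1 ∧ w i' = 0 := by
    have h1 := dfirst i
    have h2 := dfirst i'
    have h3 := hmin (L-1) (by omega) (i+1) (i'+1)
    have h4 := hmin (L-1) (by omega) (i'+1) (i+1)
    rcases fin2_cases (w i) with hwi | hwi <;> rcases fin2_cases (w i') with hwi' | hwi'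
    · rw [hwi, iteA] at h1; rw [hwi', iteA] at h2; omega
    · rw [hwi, iteA] at h1; rw [hwi', iteB] at h2; omega
    · exact ⟨hwi, hwi'⟩
    · rw [hwi, iteB] at h1; rw [hwi', iteB] at h2; omega
  -- last letters
  have hll : w (i + (L-1)) = 1 ∧ w (i' + (L-1)) = 0 := by
    have h1 := dlastL i
    have h2 := dlastL i'
    have h3 := hmin (L-1) (by omega) i i'
    have h4 := hmin (L-1) (by omega) i' i
    rcases fin2_cases (w (i+(L-1))) with hwi | hwi <;>
      rcases fin2_cases (w (i'+(L-1))) with hwi' | hwi'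
    · rw [hwi, iteA] at h1; rw [hwi', iteA] at h2; omega
    · rw [hwi, iteA] at h1; rw [hwi', iteB] at h2; omega
    · exact ⟨hwi, hwi'⟩
    · rw [hwi, iteB] at h1; rw [hwi', iteB] at h2; omega
  -- equal middles count
  have dmid : ∀ a, onesCnt w (a+1) (L-1) = onesCnt w (a+1) n + (if w (a+(L-1)) = 1 then 1 else 0) := by
    intro a
    have h := onesCnt_succ w (a+1) n
    have e : n + 1 = L - 1 := by omega
    rw [e] at h
    have e2 : a + 1 + n = a + (L-1) := by omega
    rw [e2] at h
    exact h
  have hcntU : onesCnt w i L = onesCnt w (i+1) n + 2 := by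
    rw [dfirst i, hfl.1, iteB, dmid i, hll.1, iteB]
    omega
  have hcntV : onesCnt w i' L = onesCnt w (i'+1) n := by
    rw [dfirst i', hfl.2, iteA, dmid i', hll.2, iteA]
    omega
  have hs : onesCnt w (i+1) n = onesCnt w (i'+1) n := by
    have h1 : onesCnt w i (L-1) = onesCnt w (i+1) n + 1 := by
      have := dfirst i
      rw [hfl.1, iteB, dmid i, hll.1, iteB] at this
      have h2 := dlastL i
      rw [hll.1, iteB] at h2
      omega
    have h2 : onesCnt w i' (L-1) = onesCnt w (i'+1) n := by
      have := dfirst i'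
      rw [hfl.2, iteA, dmid i', hll.2, iteA] at this
      have h3 := dlastL i'
      rw [hll.2, iteA] at h3
      omega
    have h5 := hmin (L-1) (by omega) i i'
    rw [h1, h2] at h5
    rw [hcntU, hcntV] at hLbad
    omega
  -- middles are equal as words
  have mid : ∀ j, j < n → w (i+1+j) = w (i'+1+j) := by
    by_contra hcon2
    push_neg at hcon2
    obtain ⟨j₀', hj₀n', hj₀ne'⟩ := hcon2
    have hex2 : ∃ j, j < n ∧ w (i+1+j) ≠ w (i'+1+j) := ⟨j₀', hj₀n', hj₀ne'⟩
    obtain ⟨hj₀n, hj₀ne⟩ := Nat.find_spec hex2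
    set j₀ := Nat.find hex2 with hj₀def
    have hbelow : ∀ k, k < j₀ → w (i+1+k) = w (i'+1+k) := by
      intro k hk
      have h := Nat.find_min hex2 hk
      push_neg at h
      exact h (by omega)
    have hh : onesCnt w (i+1) j₀ = onesCnt w (i'+1) j₀ := onesCnt_congr hbelow
    have hsplitU : onesCnt w (i+1) n = onesCnt w (i+1) (j₀+1) + onesCnt w (i+1+(j₀+1)) (n-(j₀+1)) := by
      have h := onesCnt_add w (i+1) (j₀+1) (n-(j₀+1))
      have e : j₀ + 1 + (n - (j₀+1)) = n := by omega
      rw [e] at h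
      exact h
    have hsplitV : onesCnt w (i'+1) n = onesCnt w (i'+1) (j₀+1) + onesCnt w (i'+1+(j₀+1)) (n-(j₀+1)) := by
      have h := onesCnt_add w (i'+1) (j₀+1) (n-(j₀+1))
      have e : j₀ + 1 + (n - (j₀+1)) = n := by omega
      rw [e] at h
      exact h
    rcases fin2_cases (w (i+1+j₀)) with hc1 | hc1
    · -- σ_{j₀} = 0, τ_{j₀} = 1 ; compare suffix windows
      have hc2 : w (i'+1+j₀) = 1 :=
        fin2_eq_of_ne (show (0:Fin 2) ≠ 1 by decide) (by rw [← hc1]; exact fun hh => hj₀ne hh.symm)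
      have hU1 : onesCnt w (i+1) (j₀+1) = onesCnt w (i+1) j₀ := by
        rw [onesCnt_succ, hc1, iteA]
        omega
      have hV1 : onesCnt w (i'+1) (j₀+1) = onesCnt w (i'+1) j₀ + 1 := by
        rw [onesCnt_succ, hc2, iteB]
      -- window of length n - j₀ starting right after position j₀
      have hwinU : onesCnt w (i+1+(j₀+1)) (n-j₀) = onesCnt w (i+1+(j₀+1)) (n-(j₀+1)) + 1 := by
        have h := onesCnt_succ w (i+1+(j₀+1)) (n-(j₀+1))
        have e : n - (j₀+1) + 1 = n - j₀ := by omega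
        rw [e] at h
        have e2 : i + 1 + (j₀+1) + (n - (j₀+1)) = i + (L-1) := by omega
        rw [e2, hll.1, iteB] at h
        exact h
      have hwinV : onesCnt w (i'+1+(j₀+1)) (n-j₀) = onesCnt w (i'+1+(j₀+1)) (n-(j₀+1)) := by
        have h := onesCnt_succ w (i'+1+(j₀+1)) (n-(j₀+1))
        have e : n - (j₀+1) + 1 = n - j₀ := by omega
        rw [e] at h
        have e2 : i' + 1 + (j₀+1) + (n - (j₀+1)) = i' + (L-1) := by omega
        rw [e2, hll.2, iteA] at h
        omega
      have hminw := hmin (n - j₀) (by omega) (i+1+(j₀+1)) (i'+1+(j₀+1))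
      omega
    · -- σ_{j₀} = 1, τ_{j₀} = 0 ; compare prefixes of length j₀ + 2
      have hc2 : w (i'+1+j₀) = 0 :=
        fin2_eq_of_ne (show (1:Fin 2) ≠ 0 by decide) (by rw [← hc1]; exact fun hh => hj₀ne hh.symm)
      have hU : onesCnt w i (j₀+2) = onesCnt w (i+1) j₀ + 2 := by
        have h := onesCnt_add w i 1 (j₀+1)
        rw [onesCnt_one, hfl.1, iteB] at h
        have e : 1 + (j₀+1) = j₀ + 2 := by omega
        rw [e] at h
        rw [h, onesCnt_succ, hc1, iteB]
        omega
      have hV : onesCnt w i' (j₀+2) = onesCnt w (i'+1) j₀ := by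
        have h := onesCnt_add w i' 1 (j₀+1)
        rw [onesCnt_one, hfl.2, iteA] at h
        have e : 1 + (j₀+1) = j₀ + 2 := by omega
        rw [e] at h
        rw [h, onesCnt_succ, hc2, iteA]
        omega
      have hminw := hmin (j₀+2) (by omega) i i'
      omega
  -- palindrome
  have palin : ∀ j, j < n → w (i+1+j) = w (i+1+(n-1-j)) := by
    by_contra hcon3
    push_neg at hcon3
    obtain ⟨j₀', h1', h2'⟩ := hcon3
    have hex3 : ∃ j, j < n ∧ w (i+1+j) ≠ w (i+1+(n-1-j)) := ⟨j₀', h1', h2'⟩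
    obtain ⟨hj₀n, hj₀ne⟩ := Nat.find_spec hex3
    set j₀ := Nat.find hex3 with hj₀def
    have hbelow : ∀ k, k < j₀ → w (i+1+k) = w (i+1+(n-1-k)) := by
      intro k hk
      by_contra hne
      have h := Nat.find_min hex3 hk
      push_neg at h
      exact hne (h (by omega))
    have hj₀lt : j₀ < n - 1 - j₀ := by
      rcases Nat.lt_or_ge j₀ (n-1-j₀) with h | h
      · exact h
      · exfalso
        rcases Nat.lt_or_ge (n-1-j₀) j₀ with h2 | h2
        · have h3 := hbelow _ h2
          have e : n - 1 - (n-1-j₀) = j₀ := by omega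
          rw [e] at h3
          exact hj₀ne h3.symm
        · have : j₀ = n - 1 - j₀ := by omega
          rw [← this] at hj₀ne
          exact hj₀ne rfl
    have hmir : onesCnt w (i+1+(n-j₀)) j₀ = onesCnt w (i+1) j₀ := by
      apply onesCnt_rev
      intro k hk
      have h := hbelow (j₀-1-k) (by omega)
      have e : n - 1 - (j₀-1-k) = n - j₀ + k := by omega
      rw [e] at h
      have e2 : i + 1 + (n-j₀) + k = i + 1 + (n - j₀ + k) := by omega
      have e3 : i + 1 + (j₀ - 1 - k) = i + 1 + (j₀-1-k) := rfl
      rw [e2]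
      exact h.symm
    rcases fin2_cases (w (i+1+j₀)) with hc1 | hc1
    · -- σ_{j₀} = 0 so σ_{n-1-j₀} = 1: prefix of V vs suffix of U
      have hc2 : w (i+1+(n-1-j₀)) = 1 :=
        fin2_eq_of_ne (show (0:Fin 2) ≠ 1 by decide) (by rw [← hc1]; exact fun hh => hj₀ne hh.symm)
      have hV : onesCnt w i' (j₀+2) = onesCnt w (i+1) j₀ := by
        have h := onesCnt_add w i' 1 (j₀+1)
        rw [onesCnt_one, hfl.2, iteA] at h
        have e : 1 + (j₀+1) = j₀ + 2 := by omega
        rw [e] at h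
        have hm : onesCnt w (i'+1) (j₀+1) = onesCnt w (i+1) j₀ := by
          rw [onesCnt_succ]
          have hmc : onesCnt w (i'+1) j₀ = onesCnt w (i+1) j₀ :=
            onesCnt_congr (fun k hk => (mid k (by omega)).symm)
          rw [hmc]
          have hml := mid j₀ (by omega)
          rw [← hml, hc1, iteA]
          omega
        rw [h, hm]
        omega
      have hU : onesCnt w (i+1+(n-1-j₀)) (j₀+2) = onesCnt w (i+1) j₀ + 2 := by
        have h := onesCnt_add w (i+1+(n-1-j₀)) 1 (j₀+1)
        rw [onesCnt_one, hc2, iteB] at h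
        have e : 1 + (j₀+1) = j₀ + 2 := by omega
        rw [e] at h
        have e2 : i + 1 + (n-1-j₀) + 1 = i + 1 + (n - j₀) := by omega
        rw [e2] at h
        have hm : onesCnt w (i+1+(n-j₀)) (j₀+1) = onesCnt w (i+1) j₀ + 1 := by
          rw [onesCnt_succ, hmir]
          have e3 : i + 1 + (n-j₀) + j₀ = i + 1 + n := by omega
          have e4 : i + 1 + n = i + (L-1) := by omega
          rw [e3, e4, hll.1, iteB]
        rw [h, hm]
        omega
      have hminw := hmin (j₀+2) (by omega) (i+1+(n-1-j₀)) i'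
      omega
    · -- σ_{j₀} = 1 so σ_{n-1-j₀} = 0: prefix of U vs suffix of V
      have hc2 : w (i+1+(n-1-j₀)) = 0 :=
        fin2_eq_of_ne (show (1:Fin 2) ≠ 0 by decide) (by rw [← hc1]; exact fun hh => hj₀ne hh.symm)
      have hU : onesCnt w i (j₀+2) = onesCnt w (i+1) j₀ + 2 := by
        have h := onesCnt_add w i 1 (j₀+1)
        rw [onesCnt_one, hfl.1, iteB] at h
        have e : 1 + (j₀+1) = j₀ + 2 := by omega
        rw [e] at h
        rw [h, onesCnt_succ, hc1, iteB]
        omega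
      have hV : onesCnt w (i'+1+(n-1-j₀)) (j₀+2) = onesCnt w (i+1) j₀ := by
        have h := onesCnt_add w (i'+1+(n-1-j₀)) 1 (j₀+1)
        rw [onesCnt_one] at h
        have hw1 : w (i'+1+(n-1-j₀)) = 0 := by
          rw [mid (n-1-j₀) (by omega)] at hc2
          exact hc2
        rw [hw1, iteA] at h
        have e : 1 + (j₀+1) = j₀ + 2 := by omega
        rw [e] at h
        have e2 : i' + 1 + (n-1-j₀) + 1 = i' + 1 + (n - j₀) := by omega
        rw [e2] at h
        have hm : onesCnt w (i'+1+(n-j₀)) (j₀+1) = onesCnt w (i+1) j₀ := by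
          rw [onesCnt_succ]
          have hmc : onesCnt w (i'+1+(n-j₀)) j₀ = onesCnt w (i+1+(n-j₀)) j₀ := by
            apply onesCnt_congr
            intro k hk
            have e3 : i' + 1 + (n-j₀) + k = i' + 1 + (n-j₀+k) := by omega
            have e4 : i + 1 + (n-j₀) + k = i + 1 + (n-j₀+k) := by omega
            rw [e3, e4]
            exact (mid (n-j₀+k) (by omega)).symm
          rw [hmc, hmir]
          have e3 : i' + 1 + (n-j₀) + j₀ = i' + 1 + n := by omega
          have e4 : i' + 1 + n = i' + (L-1) := by omega
          rw [e3, e4, hll.2, iteA]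
          omega
        rw [h, hm]
        omega
      have hminw := hmin (j₀+2) (by omega) i (i'+1+(n-1-j₀))
      omega
  -- now the endgame
  rcases Nat.eq_zero_or_pos n with hn0 | hn1
  · -- n = 0 : L = 2
    have hL2' : L = 2 := by omega
    have htriv : ∀ j p : ℕ, win w j 0 = win w p 0 := by
      intro j p; funext x; exact x.elim0
    have hUocc : w (i+1-1) = 1 ∧ w (i+1+0) = 1 := by
      constructor
      · simpa using hfl.1
      · have := hll.1
        have e : i + (L-1) = i + 1 + 0 := by omega
        rw [e] at this
        exact this
    have hVocc : w (i'+1-1) = 0 ∧ w (i'+1+0) = 0 := by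
      constructor
      · simpa using hfl.2
      · have := hll.2
        have e : i' + (L-1) = i' + 1 + 0 := by omega
        rw [e] at this
        exact this
    by_cases h01 : ∃ j, 1 ≤ j ∧ w (j-1) = 0 ∧ w (j+0) = 1
    · by_cases h10 : ∃ j, 1 ≤ j ∧ w (j-1) = 1 ∧ w (j+0) = 0
      · apply four_not hst (n := 0) 0
        intro a b
        fin_cases a <;> fin_cases b
        · exact ⟨i'+1, by omega, htriv _ _, hVocc.1, hVocc.2⟩
        · obtain ⟨j, hj, hj1, hj2⟩ := h01
          exact ⟨j, hj, htriv _ _, hj1, hj2⟩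
        · obtain ⟨j, hj, hj1, hj2⟩ := h10
          exact ⟨j, hj, htriv _ _, hj1, hj2⟩
        · exact ⟨i+1, by omega, htriv _ _, hUocc.1, hUocc.2⟩
      · -- no "10": word is 1 forever from i
        push_neg at h10
        apply st_not_evp hst
        have evc : ∀ m, w (i + m) = 1 := by
          intro m
          induction m with
          | zero => simpa using hfl.1
          | succ m ih =>
              by_contra hne
              have h0 : w (i + m + 1) = 0 :=
                fin2_eq_of_ne (show (1:Fin 2) ≠ 0 by decide) (by
                  intro hh
                  exact hne (by
                    have e : i + (m+1) = i + m + 1 := by omega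
                    rw [e]; exact hh))
              have := h10 (i+m+1) (by omega) (by simpa using ih)
              rw [Nat.add_zero] at this
              exact this h0
        refine ⟨i, 1, by omega, fun j hj => ?_⟩
        have g1 : w j = 1 := by
          have e : j = i + (j - i) := by omega
          rw [e]; exact evc _
        have g2 : w (j+1) = 1 := by
          have e : j + 1 = i + (j + 1 - i) := by omega
          rw [e]; exact evc _
        rw [g1, g2]
    · -- no "01": word is 0 forever from i'
      push_neg at h01
      apply st_not_evp hst
      have evc : ∀ m, w (i' + m) = 0 := by
        intro m
        induction m with
        | zero => simpa using hfl.2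
        | succ m ih =>
            by_contra hne
            have h0 : w (i' + m + 1) = 1 :=
              fin2_eq_of_ne (show (0:Fin 2) ≠ 1 by decide) (by
                intro hh
                exact hne (by
                  have e : i' + (m+1) = i' + m + 1 := by omega
                  rw [e]; exact hh))
            have := h01 (i'+m+1) (by omega) (by simpa using ih)
            rw [Nat.add_zero] at this
            exact this h0
      refine ⟨i', 1, by omega, fun j hj => ?_⟩
      have g1 : w j = 0 := by
        have e : j = i' + (j - i') := by omega
        rw [e]; exact evc _
      have g2 : w (j+1) = 0 := by
        have e : j + 1 = i' + (j + 1 - i') := by omega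
        rw [e]; exact evc _
      rw [g1, g2]
  · -- n ≥ 1
    have hTocc : win w (i'+1) n = win w (i+1) n :=
      win_eq_iff.2 (fun k hk => (mid k hk).symm)
    have hUlast : w (i+1+n) = 1 := by
      have := hll.1
      have e : i + (L-1) = i + 1 + n := by omega
      rw [e] at this
      exact this
    have hVlast : w (i'+1+n) = 0 := by
      have := hll.2
      have e : i' + (L-1) = i' + 1 + n := by omega
      rw [e] at this
      exact this
    by_cases h01 : ∃ j, 1 ≤ j ∧ win w j n = win w (i+1) n ∧ w (j-1) = 0 ∧ w (j+n) = 1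
    · by_cases h10 : ∃ j, 1 ≤ j ∧ win w j n = win w (i+1) n ∧ w (j-1) = 1 ∧ w (j+n) = 0
      · apply four_not hst (i+1)
        intro a b
        fin_cases a <;> fin_cases b
        · exact ⟨i'+1, by omega, hTocc, by simpa using hfl.2, hVlast⟩
        · exact h01
        · exact h10
        · exact ⟨i+1, by omega, rfl, by simpa using hfl.1, hUlast⟩
      · -- "1 T 0" missing : endgame with c = 1, d = 0
        push_neg at h10
        refine endgame hst hn1 (i+1) palin 1 0 (by decide) i i' rfl
          (by simpa using hfl.1) hUlast hTocc (by simpa using hfl.2) hVlast ?_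
        intro j hj hO hl
        exact fin2_eq_of_ne (show (0:Fin 2) ≠ 1 by decide) (h10 j hj hO hl)
    · -- "0 T 1" missing : endgame with c = 0, d = 1
      push_neg at h01
      refine endgame hst hn1 (i+1) palin 0 1 (by decide) i' i hTocc
        (by simpa using hfl.2) hVlast rfl (by simpa using hfl.1) hUlast ?_
      intro j hj hO hl
      exact fin2_eq_of_ne (show (1:Fin 2) ≠ 0 by decide) (h01 j hj hO hl)

end NilpAux

namespace NilpAux
open Filter Topology
open scoped Classical

lemma onesCnt_mul (w : W2) (ℓ m : ℕ) :
    onesCnt w 0 ((m+1)*ℓ) = onesCnt w 0 (m*ℓ) + onesCnt w (m*ℓ) ℓ := by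
  have h := onesCnt_add w 0 (m*ℓ) ℓ
  have e : (m+1)*ℓ = m*ℓ + ℓ := by ring
  rw [e, h, Nat.zero_add]

lemma tendsto_mul_atTop {n : ℕ} (hn : 1 ≤ n) :
    Filter.Tendsto (fun m : ℕ => m*n) Filter.atTop Filter.atTop := by
  apply Filter.tendsto_atTop_mono (f := fun m : ℕ => m)
  · intro m
    exact Nat.le_mul_of_pos_right m (by omega)
  · exact Filter.tendsto_id

lemma sturm_bound {w : W2} (hst : St w) {α : ℝ}
    (hs : Filter.Tendsto (fun n : ℕ => (pcount w n : ℝ) / n) Filter.atTop (nhds α)) :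
    ∀ i n : ℕ, |(onesCnt w i n : ℝ) - α * n| ≤ 2 := by
  have hbal := balanced hst
  intro i n
  rcases Nat.eq_zero_or_pos n with rfl | hn
  · simp [onesCnt_zero]
  set k := onesCnt w 0 n with hk
  have hchunk : ∀ m : ℕ, m*k ≤ onesCnt w 0 (m*n) + m ∧ onesCnt w 0 (m*n) ≤ m*k + m := by
    intro m
    induction m with
    | zero => simp [onesCnt_zero]
    | succ m ih =>
        have hsucc := onesCnt_mul w n m
        have hb1 := hbal n (m*n) 0
        have hb2 := hbal n 0 (m*n)
        have e : (m+1)*k = m*k + k := by ring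
        rw [hk] at *
        omega
  have htend : Filter.Tendsto (fun m : ℕ => (pcount w (m*n) : ℝ) / ((m*n : ℕ) : ℝ))
      Filter.atTop (nhds α) := hs.comp (tendsto_mul_atTop hn)
  have hnR : (0:ℝ) < n := by exact_mod_cast hn
  have hub : α ≤ ((k:ℝ)+1)/n := by
    apply le_of_tendsto htend
    filter_upwards [Filter.eventually_ge_atTop 1] with m hm
    have hmR : (0:ℝ) < m := by exact_mod_cast hm
    have hmn : (0:ℝ) < ((m*n:ℕ):ℝ) := by
      exact_mod_cast Nat.mul_pos (show 0 < m by omega) hn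
    rw [pcount_eq, div_le_div_iff₀ hmn hnR]
    have h2 := (hchunk m).2
    have hc : ((onesCnt w 0 (m*n) : ℝ)) ≤ ((m*k + m : ℕ) : ℝ) := by exact_mod_cast h2
    push_cast at hc ⊢
    nlinarith
  have hlb : ((k:ℝ)-1)/n ≤ α := by
    apply ge_of_tendsto htend
    filter_upwards [Filter.eventually_ge_atTop 1] with m hm
    have hmR : (0:ℝ) < m := by exact_mod_cast hm
    have hmn : (0:ℝ) < ((m*n:ℕ):ℝ) := by
      exact_mod_cast Nat.mul_pos (show 0 < m by omega) hn
    rw [pcount_eq, div_le_div_iff₀ hnR hmn]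
    have h1 := (hchunk m).1
    have hc : ((m*k : ℕ) : ℝ) ≤ ((onesCnt w 0 (m*n) + m : ℕ) : ℝ) := by exact_mod_cast h1
    push_cast at hc ⊢
    nlinarith
  have hαn1 : α * n ≤ (k:ℝ) + 1 := (le_div_iff₀ hnR).1 hub
  have hαn2 : (k:ℝ) - 1 ≤ α * n := (div_le_iff₀ hnR).1 hlb
  have hb1 := hbal n i 0
  have hb2 := hbal n 0 i
  rw [← hk] at hb1 hb2
  have hc1 : (onesCnt w i n : ℝ) ≤ (k:ℝ) + 1 := by exact_mod_cast hb1
  have hc2 : (k:ℝ) ≤ (onesCnt w i n : ℝ) + 1 := by exact_mod_cast hb2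
  rw [abs_le]
  constructor <;> linarith

lemma periodic_bound {w : W2} {T : ℕ} (hT : 0 < T) (hper : ∀ i, w i = w (i + T)) {α : ℝ}
    (hs : Filter.Tendsto (fun n : ℕ => (pcount w n : ℝ) / n) Filter.atTop (nhds α)) :
    ∀ i n : ℕ, |(onesCnt w i n : ℝ) - α * n| ≤ T := by
  set K := onesCnt w 0 T with hK
  have hKT : K ≤ T := onesCnt_le w 0 T
  have hshift1 : ∀ i, onesCnt w (i+1) T = onesCnt w i T := by
    intro i
    have h1 := onesCnt_add w i 1 T
    have h2 := onesCnt_add w i T 1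
    rw [onesCnt_one] at h1
    rw [onesCnt_one] at h2
    have h3 := hper i
    have e : 1 + T = T + 1 := by omega
    rw [e] at h1
    rw [← h3] at h2
    omega
  have hshift : ∀ i, onesCnt w i T = K := by
    intro i
    induction i with
    | zero => rfl
    | succ i ih => rw [hshift1 i, ih]
  have hmult : ∀ a i r, onesCnt w i (a*T + r) = a*K + onesCnt w (i + a*T) r := by
    intro a
    induction a with
    | zero => intro i r; simp
    | succ a ih =>
        intro i r
        have e : (a+1)*T + r = T + (a*T + r) := by ring
        rw [e, onesCnt_add w i T (a*T+r), hshift i, ih (i+T) r]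
        have e2 : i + T + a*T = i + (a+1)*T := by ring
        rw [e2]
        ring
  have hpmul : ∀ m : ℕ, pcount w (m*T) = m*K := by
    intro m
    rw [pcount_eq]
    have h := hmult m 0 0
    simpa [onesCnt_zero] using h
  have hTR : (0:ℝ) < T := by exact_mod_cast hT
  have hαK : α = (K:ℝ)/T := by
    have htend : Filter.Tendsto (fun m : ℕ => (pcount w (m*T) : ℝ) / ((m*T : ℕ):ℝ))
        Filter.atTop (nhds α) := hs.comp (tendsto_mul_atTop hT)
    have heq : (fun m : ℕ => (pcount w (m*T) : ℝ) / ((m*T : ℕ):ℝ)) =ᶠ[Filter.atTop]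
        (fun _ : ℕ => (K:ℝ)/T) := by
      filter_upwards [Filter.eventually_ge_atTop 1] with m hm
      have hmR : (0:ℝ) < m := by exact_mod_cast hm
      rw [hpmul]
      push_cast
      rw [mul_div_mul_left _ _ (ne_of_gt hmR)]
    have := htend.congr' heq
    exact tendsto_nhds_unique this tendsto_const_nhds
  intro i n
  obtain ⟨a, r, hrT, hn⟩ : ∃ a r, r < T ∧ n = a*T + r := by
    refine ⟨n / T, n % T, Nat.mod_lt _ hT, ?_⟩
    rw [Nat.mul_comm]
    exact (Nat.div_add_mod _ _).symm
  have hcnt := hmult a i r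
  rw [← hn] at hcnt
  set x := onesCnt w (i + a*T) r with hx
  have hxr : x ≤ r := onesCnt_le _ _ _
  have hαn : α * n = (a*K : ℕ) + (r:ℝ)*K/T := by
    rw [hαK, hn]
    push_cast
    field_simp
  have hrKT : (r:ℝ)*K/T ≤ r := by
    rw [div_le_iff₀ hTR]
    have h1 : (K:ℝ) ≤ T := by exact_mod_cast hKT
    have h2 : (0:ℝ) ≤ r := by positivity
    nlinarith
  have hrKT0 : (0:ℝ) ≤ (r:ℝ)*K/T := by positivity
  have hxR : (onesCnt w i n : ℝ) = (a*K : ℕ) + (x:ℝ) := by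
    rw [hcnt]
    push_cast
    ring
  have hxc : (x:ℝ) ≤ r := by exact_mod_cast hxr
  have hrc : (r:ℝ) ≤ T := by
    have : r ≤ T := le_of_lt hrT
    exact_mod_cast this
  rw [abs_le, hxR, hαn]
  constructor <;> [nlinarith; nlinarith]

end NilpAux

namespace NilpAux
open scoped Classical

lemma density_bound {w : W2} {α : ℝ}
    (h : (∀ n : ℕ, 1 ≤ n → Comp w n = n + 1) ∨ ∃ T : ℕ, 0 < T ∧ ∀ i, w i = w (i + T))
    (hs : Filter.Tendsto (fun n : ℕ => (pcount w n : ℝ) / n) Filter.atTop (nhds α)) :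
    ∃ C : ℝ, 0 ≤ C ∧ ∀ i n, |(onesCnt w i n : ℝ) - α * n| ≤ C := by
  rcases h with hst | ⟨T, hT, hper⟩
  · exact ⟨2, by norm_num, fun i n => sturm_bound hst hs i n⟩
  · exact ⟨T, by positivity, fun i n => periodic_bound hT hper hs i n⟩

lemma no_common_factor {α β : ℝ} (hαβ : α < β) {wa wb : W2} {Ca Cb : ℝ}
    (hCa0 : 0 ≤ Ca) (hCb0 : 0 ≤ Cb)
    (hba : ∀ i n, |(onesCnt wa i n : ℝ) - α*n| ≤ Ca)
    (hbb : ∀ i n, |(onesCnt wb i n : ℝ) - β*n| ≤ Cb) :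
    ∃ m : ℕ, ∀ u : List (Fin 2), u.length = m → ¬ IsFactor u wa ∨ ¬ IsFactor u wb := by
  obtain ⟨m, hm⟩ := exists_nat_gt ((Ca + Cb) / (β - α))
  refine ⟨m, fun u hlen => ?_⟩
  by_contra h
  push_neg at h
  obtain ⟨⟨ia, hia⟩, ⟨ib, hib⟩⟩ := h
  rw [hlen] at hia hib
  have hequal : onesCnt wa ia m = onesCnt wb ib m := by
    apply onesCnt_congr
    intro k hk
    rw [← hia k hk, ← hib k hk]
  have h1 := hba ia m
  have h2 := hbb ib m
  rw [abs_le] at h1 h2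
  rw [hequal] at h1
  have hβα : (0:ℝ) < β - α := by linarith
  rw [div_lt_iff₀ hβα] at hm
  linarith

end NilpAux

namespace NilpAlg

def chA {γ : Type*} [Mul γ] (b : Fin 2) (t c : γ) : γ := if b = 1 then t * c else c * t

def chainL {γ : Type*} [Mul γ] (t : γ) : List (Fin 2 × γ) → γ
  | [] => t
  | p :: rest => chainL (chA p.1 t p.2) rest

lemma chainL_append {γ : Type*} [Mul γ] (l1 l2 : List (Fin 2 × γ)) (t : γ) :
    chainL t (l1 ++ l2) = chainL (chainL t l1) l2 := by
  induction l1 generalizing t with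
  | nil => rfl
  | cons p l ih => simp [chainL, ih]

lemma map_chA {γ δ : Type*} [Mul γ] [Mul δ] (φ : γ →ₙ* δ) (b : Fin 2) (t c : γ) :
    φ (chA b t c) = chA b (φ t) (φ c) := by
  unfold chA
  split <;> rw [map_mul]

lemma map_chainL {γ δ : Type*} [Mul γ] [Mul δ] (φ : γ →ₙ* δ) (l : List (Fin 2 × γ)) (t : γ) :
    φ (chainL t l) = chainL (φ t) (l.map fun p => (p.1, φ p.2)) := by
  induction l generalizing t with
  | nil => rfl
  | cons p l ih => simp [chainL, ih, map_chA]

lemma chain_eq_chainL (u : List (Fin 2)) (t : FreeMagma Unit) :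
    chain t u = chainL t (u.map fun b => (b, FreeMagma.of ())) := by
  induction u generalizing t with
  | nil => rfl
  | cons b r ih => simp [chain, chainL, chA, ih]

lemma chain_append (u v : List (Fin 2)) (t : FreeMagma Unit) :
    chain t (u ++ v) = chain (chain t u) v := by
  induction u generalizing t with
  | nil => rfl
  | cons b r ih => simp [chain, ih]

lemma chain_single (t : FreeMagma Unit) (b : Fin 2) :
    chain t [b] = chA b t (FreeMagma.of ()) := rfl

lemma countSq_mul (x y : FreeMagma Unit) :
    countSq (x * y) = countSq x + countSq y + (if x.isLeaf && y.isLeaf then 1 else 0) := rfl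

lemma isLeaf_mul (x y : FreeMagma Unit) : (x * y).isLeaf = false := rfl

lemma one_le_countSq : ∀ {M : FreeMagma Unit}, M.isLeaf = false → 1 ≤ countSq M := by
  intro M
  induction M with
  | ih1 x => intro h; simp [FreeMagma.isLeaf] at h
  | ih2 x y ihx ihy =>
      intro _
      rw [countSq_mul]
      rcases hx : x.isLeaf with _ | _
      · have := ihx hx
        omega
      · rcases hy : y.isLeaf with _ | _
        · have := ihy hy
          omega
        · simp

lemma isLeaf_chain (u : List (Fin 2)) (x y : FreeMagma Unit) :
    (chain (x * y) u).isLeaf = false := by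
  induction u generalizing x y with
  | nil => rfl
  | cons b r ih =>
      rw [chain]
      split
      · exact ih _ _
      · exact ih _ _

lemma chain_is_mul (u : List (Fin 2)) (x y : FreeMagma Unit) :
    ∃ a b, chain (x * y) u = a * b := by
  induction u generalizing x y with
  | nil => exact ⟨x, y, rfl⟩
  | cons b r ih =>
      rw [chain]
      split
      · exact ih _ _
      · exact ih _ _

lemma countSq_chain (u : List (Fin 2)) : ∀ {t : FreeMagma Unit}, t.isLeaf = false →
    countSq (chain t u) = countSq t := by
  induction u with
  | nil => intro t _; rfl
  | cons b r ih =>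
      intro t ht
      rw [chain]
      split
      · rw [ih (isLeaf_mul _ _), countSq_mul, ht]
        simp [countSq, FreeMagma.isLeaf]
      · rw [ih (isLeaf_mul _ _), countSq_mul, ht]
        simp [countSq, FreeMagma.isLeaf]

lemma countSq_aSq : countSq aSq = 1 := rfl

lemma aSq_isLeaf : aSq.isLeaf = false := rfl

lemma countSq_chain_aSq (u : List (Fin 2)) : countSq (chain aSq u) = 1 :=
  countSq_chain u rfl

lemma isLeaf_chain_aSq (u : List (Fin 2)) : (chain aSq u).isLeaf = false :=
  isLeaf_chain u (FreeMagma.of ()) (FreeMagma.of ())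

lemma shape : ∀ M : FreeMagma Unit,
    M = FreeMagma.of () ∨ 2 ≤ countSq M ∨ ∃ v, M = chain aSq v := by
  intro M
  induction M with
  | ih1 x => exact Or.inl rfl
  | ih2 x y ihx ihy =>
      rcases ihx with rfl | hx | ⟨v, rfl⟩
      · rcases ihy with rfl | hy | ⟨v, rfl⟩
        · right; right; exact ⟨[], rfl⟩
        · right; left
          rw [countSq_mul]
          omega
        · right; right
          refine ⟨v ++ [0], ?_⟩
          rw [chain_append, chain_single]
          rfl
      · right; left
        rw [countSq_mul]
        omega
      · rcases ihy with rfl | hy | ⟨v', rfl⟩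
        · right; right
          refine ⟨v ++ [1], ?_⟩
          rw [chain_append, chain_single]
          rfl
        · right; left
          rw [countSq_mul]
          omega
        · right; left
          rw [countSq_mul, countSq_chain_aSq, countSq_chain_aSq]
          omega

lemma subt_chain_self (v : List (Fin 2)) : subt (chain aSq v) (chain aSq v) := by
  obtain ⟨a, b, h⟩ := chain_is_mul v (FreeMagma.of ()) (FreeMagma.of ())
  rw [show chain aSq v = a * b from h]
  exact Or.inl rfl

lemma isFactor_of_suffix {u v : List (Fin 2)} {w : ℕ → Fin 2} (hsuf : u <:+ v)
    (hf : IsFactor v w) : IsFactor u w := by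
  obtain ⟨t, rfl⟩ := hsuf
  obtain ⟨i, hi⟩ := hf
  refine ⟨i + t.length, fun j hj => ?_⟩
  have h1 : (t ++ u).getD (t.length + j) 0 = u.getD j 0 := by
    rw [List.getD_append_right _ _ _ _ (by omega)]
    congr 1
    omega
  have h2 := hi (t.length + j) (by rw [List.length_append]; omega)
  rw [h1] at h2
  rw [h2]
  congr 1
  omega

end NilpAlg

namespace NilpAlg

variable {F : Type} [Field F] [CharZero F]

lemma mono_mul (M M' : FreeMagma Unit) : mono F M * mono F M' = mono F (M * M') := by
  unfold mono
  rw [MonoidAlgebra.single_mul_single, one_mul]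

lemma single_eq_smul_mono (a : FreeMagma Unit) (b : F) :
    (MonoidAlgebra.single a b : FA F) = b • mono F a := by
  rw [mono, MonoidAlgebra.smul_single', mul_one]

lemma mem_of_monos {p : Submodule F (FA F)} (h : ∀ M, mono F M ∈ p) (x : FA F) : x ∈ p := by
  induction x using MonoidAlgebra.induction with
  | zero => exact p.zero_mem
  | single_add a b f _ _ ihf =>
      refine p.add_mem ?_ ihf
      rw [single_eq_smul_mono]
      exact p.smul_mem b (h a)

lemma mul_mem_of_monos {p : Submodule F (FA F)}
    (h : ∀ M M', mono F M * mono F M' ∈ p) (x y : FA F) : x * y ∈ p := by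
  have hy : ∀ M (z : FA F), mono F M * z ∈ p := by
    intro M z
    induction z using MonoidAlgebra.induction with
    | zero => rw [mul_zero]; exact p.zero_mem
    | single_add a b f _ _ ihf =>
        rw [mul_add]
        refine p.add_mem ?_ ihf
        rw [single_eq_smul_mono, mul_smul_comm]
        exact p.smul_mem b (h M a)
  induction x using MonoidAlgebra.induction with
  | zero => rw [zero_mul]; exact p.zero_mem
  | single_add a b f _ _ ihf =>
      rw [add_mul]
      refine p.add_mem ?_ ihf
      rw [single_eq_smul_mono, smul_mul_assoc]
      exact p.smul_mem b (hy a y)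

/-- invariant submodule -/
def GS (w : ℕ → Fin 2) (u r : List (Fin 2)) : Submodule F (FA F) :=
  Submodule.span F {x : FA F | ∃ M : FreeMagma Unit,
    (2 ≤ countSq M ∨ ∃ v, M = chain aSq v ∧ u <:+ v ++ r) ∧ x = mono F M}

lemma mono_mem_GS {w : ℕ → Fin 2} {u r : List (Fin 2)} {M : FreeMagma Unit}
    (h : 2 ≤ countSq M ∨ ∃ v, M = chain aSq v ∧ u <:+ v ++ r) :
    mono F M ∈ GS (F := F) w u r :=
  Submodule.subset_span ⟨M, h, rfl⟩

lemma base_mem (w : ℕ → Fin 2) (u : List (Fin 2)) (f g : FA F) :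
    f * g ∈ GS (F := F) w u u := by
  apply mul_mem_of_monos
  intro M M'
  rw [mono_mul]
  apply mono_mem_GS
  rcases shape M with rfl | hM | ⟨v, rfl⟩
  · rcases shape M' with rfl | hM' | ⟨v, rfl⟩
    · exact Or.inr ⟨[], rfl, by simpa using List.suffix_refl u⟩
    · left
      rw [countSq_mul]
      omega
    · refine Or.inr ⟨v ++ [0], ?_, ?_⟩
      · rw [chain_append, chain_single]
        rfl
      · exact List.suffix_append _ u
  · left
    rw [countSq_mul]
    omega
  · rcases shape M' with rfl | hM' | ⟨v', rfl⟩
    · refine Or.inr ⟨v ++ [1], ?_, ?_⟩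
      · rw [chain_append, chain_single]
        rfl
      · exact List.suffix_append _ u
    · left
      rw [countSq_mul]
      omega
    · left
      rw [countSq_mul, countSq_chain_aSq, countSq_chain_aSq]
      omega

end NilpAlg

namespace NilpAlg

variable {F : Type} [Field F] [CharZero F]

lemma chA_mono (b : Fin 2) (M M' : FreeMagma Unit) :
    chA b (mono F M) (mono F M') = mono F (chA b M M') := by
  unfold chA
  split <;> rw [mono_mul]

lemma countSq_chA_ge (b : Fin 2) (M M' : FreeMagma Unit) :
    countSq M ≤ countSq (chA b M M') := by
  unfold chA
  split <;> rw [countSq_mul] <;> omega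

lemma step_mem {w : ℕ → Fin 2} {u : List (Fin 2)} (b : Fin 2) (r : List (Fin 2))
    {x : FA F} (hx : x ∈ GS (F := F) w u (b :: r)) (c : FA F) :
    chA b x c ∈ GS (F := F) w u r := by
  induction hx using Submodule.span_induction with
  | mem x h =>
      obtain ⟨M, hM, rfl⟩ := h
      -- reduce c to monomials
      have hc : ∀ z : FA F, chA b (mono F M) z ∈ GS (F := F) w u r := by
        intro z
        induction z using MonoidAlgebra.induction with
        | zero =>
            have : chA b (mono F M) 0 = 0 := by unfold chA; split <;> simp
            rw [this]; exact (GS w u r).zero_mem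
        | single_add a bb f _ _ ihf =>
            have : chA b (mono F M) (MonoidAlgebra.single a bb + f)
                = chA b (mono F M) (MonoidAlgebra.single a bb) + chA b (mono F M) f := by
              unfold chA; split <;> [rw [mul_add]; rw [add_mul]]
            rw [this]
            refine Submodule.add_mem _ ?_ ihf
            rw [single_eq_smul_mono]
            have : chA b (mono F M) (bb • mono F a) = bb • chA b (mono F M) (mono F a) := by
              unfold chA; split <;> [rw [mul_smul_comm]; rw [smul_mul_assoc]]
            rw [this]
            refine Submodule.smul_mem _ bb ?_
            rw [chA_mono]
            apply mono_mem_GS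
            rcases hM with hM | ⟨v, rfl, hsuf⟩
            · left
              exact le_trans hM (countSq_chA_ge b _ _)
            · rcases shape a with rfl | ha2 | ⟨v', rfl⟩
              · right
                refine ⟨v ++ [b], ?_, ?_⟩
                · unfold chA
                  rw [chain_append, chain_single]
                  rfl
                · rw [List.append_assoc]
                  simpa using hsuf
              · left
                unfold chA
                split <;> rw [countSq_mul, countSq_chain_aSq] <;> omega
              · left
                unfold chA
                split <;> rw [countSq_mul, countSq_chain_aSq, countSq_chain_aSq] <;> omega
      exact hc c
  | zero =>
      have : chA b (0 : FA F) c = 0 := by unfold chA; split <;> simp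
      rw [this]; exact (GS w u r).zero_mem
  | add x y hxs hys ihx ihy =>
      have : chA b (x + y) c = chA b x c + chA b y c := by
        unfold chA; split <;> [rw [add_mul]; rw [mul_add]]
      rw [this]; exact Submodule.add_mem _ ihx ihy
  | smul a x hxs ih =>
      have : chA b (a • x) c = a • chA b x c := by
        unfold chA; split <;> [rw [smul_mul_assoc]; rw [mul_smul_comm]]
      rw [this]; exact Submodule.smul_mem _ a ih

lemma final_mem {w : ℕ → Fin 2} {u : List (Fin 2)} (hu : ¬ IsFactor u w) :
    GS (F := F) w u [] ≤ relIW F w := by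
  rw [GS, Submodule.span_le]
  rintro x ⟨M, hM, rfl⟩
  apply Submodule.subset_span
  refine ⟨M, ?_, rfl⟩
  rcases hM with hM | ⟨v, rfl, hsuf⟩
  · exact Or.inl hM
  · rw [List.append_nil] at hsuf
    refine Or.inr ⟨v, fun hf => hu (isFactor_of_suffix hsuf hf), subt_chain_self v⟩

lemma chainRel {w : ℕ → Fin 2} {u : List (Fin 2)} (hu : ¬ IsFactor u w) :
    ∀ (L : List (Fin 2 × FA F)) (r : List (Fin 2)), L.map Prod.fst = r →
      ∀ x ∈ GS (F := F) w u r, chainL x L ∈ relIW F w := by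
  intro L
  induction L with
  | nil =>
      intro r hr x hx
      rw [← hr] at hx
      exact final_mem hu hx
  | cons p L ih =>
      intro r hr x hx
      rw [← hr] at hx
      show chainL (chA p.1 x p.2) L ∈ relIW F w
      exact ih _ rfl _ (step_mem p.1 _ hx p.2)

lemma mem_IdW_iff {w : ℕ → Fin 2} {f : FreeN F} : f ∈ IdW F w ↔
    ∀ xs : ℕ → FA F, FreeNonUnitalNonAssocAlgebra.lift F xs f ∈ relIW F w := by
  simp only [IdW, Submodule.mem_iInf, Submodule.mem_comap]
  rfl

lemma lift_mono_eq {X : Type*} {B : Type*} [NonUnitalNonAssocSemiring B] [Module F B]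
    [IsScalarTower F B B] [SMulCommClass F B B] (xs : X → B) (t : FreeMagma X) :
    FreeNonUnitalNonAssocAlgebra.lift F xs (MonoidAlgebra.single t (1:F)) = FreeMagma.lift xs t := by
  show (MonoidAlgebra.liftMagma F (FreeMagma.lift xs : FreeMagma X →ₙ* B))
      (MonoidAlgebra.single t 1) = FreeMagma.lift xs t
  simp [MonoidAlgebra.liftMagma_apply_apply]

def TL (u : List (Fin 2)) : List (Fin 2 × FreeMagma ℕ) :=
  (List.range u.length).map (fun k => (u.getD k 0, FreeMagma.of (k+2)))

def TN (u : List (Fin 2)) : FreeMagma ℕ :=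
  chainL (FreeMagma.of 0 * FreeMagma.of 1) (TL u)

lemma TL_fst (u : List (Fin 2)) : (TL u).map Prod.fst = u := by
  apply List.ext_getElem
  · simp [TL]
  · intro i h1 h2
    simp only [TL, List.map_map, List.getElem_map, List.getElem_range, Function.comp]
    exact List.getD_eq_getElem u 0 h2

lemma patId {w : ℕ → Fin 2} {u : List (Fin 2)} (hu : ¬ IsFactor u w) :
    monoN F (TN u) ∈ IdW F w := by
  rw [mem_IdW_iff]
  intro xs
  rw [monoN, lift_mono_eq, TN, map_chainL (FreeMagma.lift xs : FreeMagma ℕ →ₙ* FA F)]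
  apply chainRel hu _ u
  · rw [List.map_map]
    have : (Prod.fst ∘ fun p : Fin 2 × FreeMagma ℕ =>
        (p.1, (FreeMagma.lift xs : FreeMagma ℕ →ₙ* FA F) p.2)) = Prod.fst := rfl
    rw [this, TL_fst]
  · rw [map_mul]
    exact base_mem w u _ _

def G1 : Submodule F (FA F) :=
  Submodule.span F {x : FA F | ∃ M : FreeMagma Unit, M.isLeaf = false ∧ x = mono F M}

lemma mul_mem_G1 (f g : FA F) : f * g ∈ (G1 : Submodule F (FA F)) := by
  apply mul_mem_of_monos
  intro M M'
  rw [mono_mul]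
  exact Submodule.subset_span ⟨M * M', isLeaf_mul M M', rfl⟩

lemma G1_mul_G1 {w : ℕ → Fin 2} {x y : FA F} (hx : x ∈ (G1 : Submodule F (FA F)))
    (hy : y ∈ (G1 : Submodule F (FA F))) : x * y ∈ relIW F w := by
  induction hx using Submodule.span_induction with
  | mem x h =>
      obtain ⟨M, hM, rfl⟩ := h
      induction hy using Submodule.span_induction with
      | mem y h' =>
          obtain ⟨M', hM', rfl⟩ := h'
          rw [mono_mul]
          apply Submodule.subset_span
          refine ⟨M * M', Or.inl ?_, rfl⟩
          rw [countSq_mul]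
          have := one_le_countSq hM
          have := one_le_countSq hM'
          omega
      | zero => rw [mul_zero]; exact Submodule.zero_mem _
      | add y z _ _ ihy ihz => rw [mul_add]; exact Submodule.add_mem _ ihy ihz
      | smul a y _ ihy => rw [mul_smul_comm]; exact Submodule.smul_mem _ a ihy
  | zero => rw [zero_mul]; exact Submodule.zero_mem _
  | add x z _ _ ihx ihz => rw [add_mul]; exact Submodule.add_mem _ ihx ihz
  | smul a x _ ihx => rw [smul_mul_assoc]; exact Submodule.smul_mem _ a ihx

lemma fourId (w : ℕ → Fin 2) :
    monoN F ((FreeMagma.of 0 * FreeMagma.of 1) * (FreeMagma.of 2 * FreeMagma.of 3)) ∈ IdW F w := by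
  rw [mem_IdW_iff]
  intro xs
  rw [monoN, lift_mono_eq, map_mul]
  exact G1_mul_G1 (mul_mem_G1 _ _) (mul_mem_G1 _ _)

end NilpAlg

namespace NilpAlg

variable {F : Type} [Field F] [CharZero F]

def subtN (s : FreeMagma ℕ) : FreeMagma ℕ → Prop
  | .of x => s = .of x
  | .mul a b => s = FreeMagma.mul a b ∨ subtN s a ∨ subtN s b

lemma lift_zero_of_subtN {B : Type*} [NonUnitalNonAssocRing B] (xs : ℕ → B)
    {s : FreeMagma ℕ} : ∀ {t}, subtN s t → FreeMagma.lift xs s = 0 →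
      FreeMagma.lift xs t = 0 := by
  intro t
  induction t with
  | ih1 x =>
      intro hs h
      rw [show s = FreeMagma.of x from hs] at h
      exact h
  | ih2 a b iha ihb =>
      intro hs h
      rcases hs with he | hs | hs
      · rw [he] at h; exact h
      · rw [map_mul, iha hs h, zero_mul]
      · rw [map_mul, ihb hs h, mul_zero]

def chainV (t : FreeMagma ℕ) (L : List (Fin 2 × ℕ)) : FreeMagma ℕ :=
  chainL t (L.map fun p => (p.1, FreeMagma.of p.2))

lemma numLeaves_pos (t : FreeMagma ℕ) : 1 ≤ numLeaves t := by
  induction t with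
  | ih1 x => exact le_refl _
  | ih2 a b iha ihb => show 1 ≤ numLeaves a + numLeaves b; omega

lemma dichotomy : ∀ t : FreeMagma ℕ, 2 ≤ numLeaves t →
    (∃ i j L, t = chainV (FreeMagma.of i * FreeMagma.of j) L ∧ L.length + 2 = numLeaves t)
    ∨ (∃ a b c d, subtN ((a*b)*(c*d)) t) := by
  intro t
  induction t with
  | ih1 x => intro h; exact absurd h (by simp [numLeaves])
  | ih2 x y ihx ihy =>
      intro _
      match x, y with
      | .of i, .of j =>
          left
          exact ⟨i, j, [], rfl, rfl⟩
      | .of i, .mul y1 y2 =>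
          have h2 : 2 ≤ numLeaves (FreeMagma.mul y1 y2) := by
            have := numLeaves_pos y1
            have := numLeaves_pos y2
            show 2 ≤ numLeaves y1 + numLeaves y2
            omega
          rcases ihy h2 with ⟨i', j', L, hy, hlen⟩ | ⟨a, b, c, d, hsub⟩
          · left
            refine ⟨i', j', L ++ [(0, i)], ?_, ?_⟩
            · show FreeMagma.of i * FreeMagma.mul y1 y2 = _
              rw [chainV, List.map_append, chainL_append]
              rw [hy]
              rfl
            · rw [List.length_append]
              show L.length + 1 + 2 = numLeaves (FreeMagma.of i) + numLeaves (FreeMagma.mul y1 y2)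
              rw [show numLeaves (FreeMagma.of i) = 1 from rfl]
              omega
          · right
            exact ⟨a, b, c, d, Or.inr (Or.inr hsub)⟩
      | .mul x1 x2, .of j =>
          have h2 : 2 ≤ numLeaves (FreeMagma.mul x1 x2) := by
            have := numLeaves_pos x1
            have := numLeaves_pos x2
            show 2 ≤ numLeaves x1 + numLeaves x2
            omega
          rcases ihx h2 with ⟨i', j', L, hx, hlen⟩ | ⟨a, b, c, d, hsub⟩
          · left
            refine ⟨i', j', L ++ [(1, j)], ?_, ?_⟩
            · show FreeMagma.mul x1 x2 * FreeMagma.of j = _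
              rw [chainV, List.map_append, chainL_append]
              rw [hx]
              rfl
            · rw [List.length_append]
              show L.length + 1 + 2 = numLeaves (FreeMagma.mul x1 x2) + numLeaves (FreeMagma.of j)
              rw [show numLeaves (FreeMagma.of j) = 1 from rfl]
              omega
          · right
            exact ⟨a, b, c, d, Or.inr (Or.inl hsub)⟩
      | .mul x1 x2, .mul y1 y2 =>
          right
          exact ⟨x1, x2, y1, y2, Or.inl rfl⟩

lemma eval_chainV {B : Type*} [Mul B] (xs : ℕ → B) (t : FreeMagma ℕ) (L : List (Fin 2 × ℕ)) :
    FreeMagma.lift xs (chainV t L)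
      = chainL (FreeMagma.lift xs t) (L.map fun p => (p.1, xs p.2)) := by
  rw [chainV, map_chainL (FreeMagma.lift xs : FreeMagma ℕ →ₙ* B)]
  congr 1
  rw [List.map_map]
  apply List.map_congr_left
  intro p _
  simp [Function.comp]

lemma key_eval {B : Type} [NonUnitalNonAssocRing B] [Module F B] [IsScalarTower F B B]
    [SMulCommClass F B B] (w : ℕ → Fin 2)
    (hB : InVarietyOf F w B)
    {u : List (Fin 2)} (hu : ¬IsFactor u w) (i j : ℕ) (L : List (Fin 2 × ℕ))
    (hL : L.map Prod.fst = u) (xs : ℕ → B) :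
    FreeMagma.lift xs (chainV (FreeMagma.of i * FreeMagma.of j) L) = 0 := by
  classical
  set ys : ℕ → B := fun k => if k = 0 then xs i else if k = 1 then xs j
    else xs ((L.getD (k-2) (0,0)).2) with hys
  have h0 := hB (monoN F (TN u)) (patId hu) ys
  rw [monoN, lift_mono_eq, TN, map_chainL (FreeMagma.lift ys : FreeMagma ℕ →ₙ* B)] at h0
  rw [eval_chainV]
  have hbase : FreeMagma.lift xs (FreeMagma.of i * FreeMagma.of j)
      = (FreeMagma.lift ys : FreeMagma ℕ →ₙ* B) (FreeMagma.of 0 * FreeMagma.of 1) := by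
    rw [map_mul, map_mul]
    simp only [FreeMagma.lift_of, hys]
    norm_num
  have hlist : (L.map fun p => (p.1, xs p.2))
      = ((TL u).map fun p => (p.1, (FreeMagma.lift ys : FreeMagma ℕ →ₙ* B) p.2)) := by
    have hulen : u.length = L.length := by rw [← hL, List.length_map]
    apply List.ext_getElem
    · simp [TL, hulen]
    · intro k h1 h2
      simp only [List.getElem_map, TL, List.getElem_range]
      have hkL : k < L.length := by simpa using h1
      have hku : k < u.length := by omega
      rw [Prod.mk.injEq]
      constructor
      · have hmap : (List.map Prod.fst L)[k]'(by simpa using hkL) = u[k]'hku :=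
          List.getElem_of_eq hL _
        rw [List.getD_eq_getElem u 0 hku, ← hmap, List.getElem_map]
      · rw [FreeMagma.lift_of]
        show xs L[k].2 = ys (k+2)
        simp only [hys]
        rw [if_neg (by omega), if_neg (by omega)]
        congr 2
        rw [Nat.add_sub_cancel]
        rw [List.getD_eq_getElem L (0,0) hkL]
  rw [hbase, hlist]
  exact h0

end NilpAlg


/-- for `0 < α < β < 1` the variety `V_α ∩ V_β` is nilpotent: there is `m`
such that in every algebra satisfying the identities of both `A_α` and `A_β`, every
product of `m + 2` elements (with any arrangement of parentheses) is zero; in particular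
`c_{m+2}(V_α ∩ V_β) = 0`. -/
theorem intersection_nilpotent (α β : ℝ) (h0 : 0 < α) (hαβ : α < β) (h1 : β < 1)
    (wa wb : ℕ → Fin 2)
    (ha : (∀ n : ℕ, 1 ≤ n → Comp wa n = n + 1) ∨ ∃ T : ℕ, 0 < T ∧ ∀ i, wa i = wa (i + T))
    (hb : (∀ n : ℕ, 1 ≤ n → Comp wb n = n + 1) ∨ ∃ T : ℕ, 0 < T ∧ ∀ i, wb i = wb (i + T))
    (hsa : Filter.Tendsto (fun n : ℕ => (pcount wa n : ℝ) / n) Filter.atTop (nhds α))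
    (hsb : Filter.Tendsto (fun n : ℕ => (pcount wb n : ℝ) / n) Filter.atTop (nhds β)) :
    ∃ m : ℕ, ∀ (B : Type) (_ : NonUnitalNonAssocRing B) (_ : Module F B)
      (_ : IsScalarTower F B B) (_ : SMulCommClass F B B),
      InVarietyOf F wa B → InVarietyOf F wb B →
      ∀ t : FreeMagma ℕ, numLeaves t = m + 2 →
        ∀ xs : ℕ → B, FreeMagma.lift xs t = 0 := by

  classical
  obtain ⟨Ca, hCa0, hba⟩ := NilpAux.density_bound ha hsa
  obtain ⟨Cb, hCb0, hbb⟩ := NilpAux.density_bound hb hsb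
  obtain ⟨m, hm⟩ := NilpAux.no_common_factor hαβ hCa0 hCb0 hba hbb
  refine ⟨m, ?_⟩
  intro B _ _ _ _ hVa hVb t ht xs
  rcases NilpAlg.dichotomy t (by omega) with ⟨i, j, L, rfl, hlen⟩ | ⟨a, b, c, d, hsub⟩
  · have hulen : (L.map Prod.fst).length = m := by
      rw [List.length_map]
      omega
    rcases hm (L.map Prod.fst) hulen with hua | hub
    · exact NilpAlg.key_eval (F := F) wa hVa hua i j L rfl xs
    · exact NilpAlg.key_eval (F := F) wb hVb hub i j L rfl xs
  · apply NilpAlg.lift_zero_of_subtN xs hsub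
    have h0 := hVa _ (NilpAlg.fourId (F := F) wa)
      (fun k => if k = 0 then FreeMagma.lift xs a else if k = 1 then FreeMagma.lift xs b
        else if k = 2 then FreeMagma.lift xs c else FreeMagma.lift xs d)
    rw [monoN, NilpAlg.lift_mono_eq] at h0
    simp only [map_mul, FreeMagma.lift_of] at h0
    norm_num at h0
    rw [map_mul, map_mul, map_mul]
    exact h0
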